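/- arXiv:1301.3421 — 9 statements merged into one kernel-verified Lean document; each statement's English description precedes it below -/
import Mathlib

section
/- Let V be a complex inner product space of dimension M with a fixed orthonormal basis e_1, …, e_M, and let ψ ∈ ⋀²V. Suppose U and U' are unitary operators on V, k, k' ≥ 0 are integers with 2k ≤ M and 2k' ≤ M, and c_1 ≥ … ≥ c_k > 0 and c'_1 ≥ … ≥ c'_{k'} > 0 are real numbers such that (⋀²U) ψ = Σ_{i=1}^{k} c_i · e_{2i-1} ∧ e_{2i} and (⋀²U') ψ = Σ_{i=1}^{k'} c'_i · e_{2i-1} ∧ e_{2i}. Then k = k' and c_i = c'_i for all 1 ≤ i ≤ k. -/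
open ExteriorAlgebra Finset

noncomputable section
open Matrix

/-- The single-particle Hilbert space: `ℂ^M` with its standard inner product. -/
abbrev V (M : ℕ) : Type := EuclideanSpace ℂ (Fin M)

/-- The fixed orthonormal basis vector `e_n` (1-indexed, `1 ≤ n ≤ M`);
out-of-range indices give `0`. -/
def stdVec (M n : ℕ) : V M :=
  if h : 1 ≤ n ∧ n ≤ M then EuclideanSpace.single (⟨n - 1, by omega⟩ : Fin M) 1 else 0

/-- The wedge `e_{i 0} ∧ ⋯ ∧ e_{i (N-1)}` in the exterior algebra of `V M`. -/
def wedge (M N : ℕ) (i : Fin N → ℕ) : ExteriorAlgebra ℂ (V M) :=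
  ExteriorAlgebra.ιMulti ℂ N fun j => stdVec M (i j)

/-- `i` enumerates a strictly increasing sequence of indices in `{1, …, M}`. -/
def IsBasisIndex (M N : ℕ) (i : Fin N → ℕ) : Prop :=
  StrictMono i ∧ ∀ j, 1 ≤ i j ∧ i j ≤ M

/-- Single occupancy: no two of the indices lie in the same standard pair
`{2k-1, 2k}` (the pair of `n` is `(n+1)/2`). -/
def SingleOcc (N : ℕ) (i : Fin N → ℕ) : Prop :=
  ∀ j k : Fin N, j ≠ k → (i j + 1) / 2 ≠ (i k + 1) / 2

/-- The single occupancy subspace `𝒮 ⊆ ⋀^N V`: the span of all basic single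
occupancy vectors. -/
def SOV (M N : ℕ) : Submodule ℂ (ExteriorAlgebra ℂ (V M)) :=
  Submodule.span ℂ
    {x | ∃ i : Fin N → ℕ, IsBasisIndex M N i ∧ SingleOcc N i ∧ x = wedge M N i}

/-- The exterior power of a unitary operator `U` on `V M`, acting on the whole
exterior algebra (on `⋀^N V` it acts as `⋀^N U`). -/
def luMap (M : ℕ) (U : V M ≃ₗᵢ[ℂ] V M) :
    ExteriorAlgebra ℂ (V M) →ₐ[ℂ] ExteriorAlgebra ℂ (V M) :=
  ExteriorAlgebra.map U.toLinearEquiv.toLinearMap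

lemma sum_shift {k : ℕ} (hk : 1 ≤ k) (f : ℕ → ℝ) :
    ∑ i ∈ Icc 1 k, f i = f 1 + ∑ i ∈ Icc 1 (k-1), f (i+1) := by
  have h1 : Icc 1 k = insert 1 (Icc 2 k) := by
    ext x; simp [Finset.mem_Icc, Finset.mem_insert]; omega
  have h2 : ∑ i ∈ Icc 1 (k-1), f (i+1) = ∑ i ∈ Icc 2 k, f i := by
    rw [show Icc 2 k = (Icc 1 (k-1)).map (addRightEmbedding 1) by
      rw [Finset.map_add_right_Icc]; congr 1 <;> omega, Finset.sum_map]
    simp [addRightEmbedding]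
  rw [h1, Finset.sum_insert (by simp), h2]

lemma top_le (k k' : ℕ) (c c' : ℕ → ℝ)
    (hmono : ∀ i j : ℕ, 1 ≤ i → i ≤ j → j ≤ k' → c' j ≤ c' i)
    (hpos : ∀ i : ℕ, 1 ≤ i → i ≤ k → 0 < c i)
    (hpos' : ∀ i : ℕ, 1 ≤ i → i ≤ k' → 0 < c' i)
    (hsum : ∀ m : ℕ, 1 ≤ m → ∑ i ∈ Icc 1 k, c i ^ m = ∑ i ∈ Icc 1 k', c' i ^ m)
    (hk : 1 ≤ k) (hk' : 1 ≤ k') : c 1 ≤ c' 1 := by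
  by_contra hlt
  push_neg at hlt
  have hc'1 : 0 < c' 1 := hpos' 1 le_rfl hk'
  have hr : 1 < c 1 / c' 1 := (one_lt_div hc'1).2 hlt
  obtain ⟨m, hm⟩ := pow_unbounded_of_one_lt (k' : ℝ) hr
  have hm1 : 1 ≤ m := by
    rcases Nat.eq_zero_or_pos m with h | h
    · subst h; simp at hm
      have : (1:ℝ) ≤ (k':ℝ) := by exact_mod_cast hk'
      linarith
    · exact h
  have key : (k' : ℝ) * c' 1 ^ m < c 1 ^ m := by
    have := (div_pow (c 1) (c' 1) m) ▸ hm
    rw [lt_div_iff₀ (by positivity)] at this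
    linarith
  have h1 : c 1 ^ m ≤ ∑ i ∈ Icc 1 k, c i ^ m := by
    have : ∀ i ∈ Icc 1 k, 0 ≤ c i ^ m := fun i hi => by
      have := hpos i (mem_Icc.1 hi).1 (mem_Icc.1 hi).2; positivity
    exact Finset.single_le_sum this (by simp [hk])
  have h2 : ∑ i ∈ Icc 1 k', c' i ^ m ≤ (k' : ℝ) * c' 1 ^ m := by
    calc ∑ i ∈ Icc 1 k', c' i ^ m ≤ ∑ _i ∈ Icc 1 k', c' 1 ^ m := by
          apply Finset.sum_le_sum
          intro i hi
          have hi' := mem_Icc.1 hi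
          exact pow_le_pow_left₀ (hpos' i hi'.1 hi'.2).le (hmono 1 i le_rfl hi'.1 hi'.2) m
      _ = (k' : ℝ) * c' 1 ^ m := by simp [Nat.card_Icc]
  have := hsum m hm1
  linarith

lemma powersum_unique : ∀ (k k' : ℕ) (c c' : ℕ → ℝ),
    (∀ i j : ℕ, 1 ≤ i → i ≤ j → j ≤ k → c j ≤ c i) →
    (∀ i j : ℕ, 1 ≤ i → i ≤ j → j ≤ k' → c' j ≤ c' i) →
    (∀ i : ℕ, 1 ≤ i → i ≤ k → 0 < c i) →
    (∀ i : ℕ, 1 ≤ i → i ≤ k' → 0 < c' i) →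
    (∀ m : ℕ, 1 ≤ m → ∑ i ∈ Icc 1 k, c i ^ m = ∑ i ∈ Icc 1 k', c' i ^ m) →
    k = k' ∧ ∀ i : ℕ, 1 ≤ i → i ≤ k → c i = c' i := by
  intro k
  induction k with
  | zero =>
    intro k' c c' _ _ _ hpos' hsum
    constructor
    · by_contra h
      have hk' : 1 ≤ k' := by omega
      have := hsum 1 le_rfl
      simp at this
      have h1 : (0:ℝ) < ∑ i ∈ Icc 1 k', c' i ^ 1 := by
        apply Finset.sum_pos
        · intro i hi
          have hi' := mem_Icc.1 hi
          have := hpos' i hi'.1 hi'.2; positivity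
        · exact ⟨1, by simp [hk']⟩
      simp at h1
      linarith
    · intro i h1 h2; omega
  | succ n ih =>
    intro k' c c' hmono hmono' hpos hpos' hsum
    have hk : 1 ≤ n + 1 := by omega
    have hk' : 1 ≤ k' := by
      by_contra h
      have hk'0 : k' = 0 := by omega
      have := hsum 1 le_rfl
      rw [hk'0] at this
      simp at this
      have h1 : (0:ℝ) < ∑ i ∈ Icc 1 (n+1), c i ^ 1 := by
        apply Finset.sum_pos
        · intro i hi
          have hi' := mem_Icc.1 hi
          have := hpos i hi'.1 hi'.2; positivity
        · exact ⟨1, by simp⟩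
      simp at h1
      linarith
    have htop : c 1 = c' 1 := by
      apply le_antisymm
      · exact top_le (n+1) k' c c' hmono' hpos hpos' hsum hk hk'
      · exact top_le k' (n+1) c' c hmono hpos' hpos
          (fun m hm => (hsum m hm).symm) hk' hk
    -- shifted sequences
    have hsum2 : ∀ m : ℕ, 1 ≤ m →
        ∑ i ∈ Icc 1 n, (fun i => c (i+1)) i ^ m = ∑ i ∈ Icc 1 (k'-1), (fun i => c' (i+1)) i ^ m := by
      intro m hm
      have e1 := sum_shift hk (fun i => c i ^ m)
      have e2 := sum_shift hk' (fun i => c' i ^ m)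
      have := hsum m hm
      simp only [Nat.add_sub_cancel] at e1
      rw [e1, e2, htop] at this
      linarith
    obtain ⟨heq, hvals⟩ := ih (k'-1) (fun i => c (i+1)) (fun i => c' (i+1))
      (fun i j h1 h2 h3 => hmono (i+1) (j+1) (by omega) (by omega) (by omega))
      (fun i j h1 h2 h3 => hmono' (i+1) (j+1) (by omega) (by omega) (by omega))
      (fun i h1 h2 => hpos (i+1) (by omega) (by omega))
      (fun i h1 h2 => hpos' (i+1) (by omega) (by omega))
      hsum2
    refine ⟨by omega, ?_⟩
    intro i h1 h2
    rcases Nat.eq_or_lt_of_le h1 with h | h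
    · rw [← h]; exact htop
    · have := hvals (i-1) (by omega) (by omega)
      simpa [Nat.sub_add_cancel (by omega : 1 ≤ i)] using this

/-- coordinate pick map -/
def pick (M : ℕ) (a b : Fin M) : V M →ₗ[ℂ] (Fin 2 → ℂ) where
  toFun v := ![v a, v b]
  map_add' x y := by ext j; fin_cases j <;> simp
  map_smul' r x := by ext j; fin_cases j <;> simp

def Gab (M : ℕ) (a b : Fin M) : (V M) [⋀^Fin 2]→ₗ[ℂ] ℂ :=
  (Matrix.detRowAlternating (R := ℂ) (n := Fin 2)).compLinearMap (pick M a b)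

def famG (M : ℕ) (a b : Fin M) : ∀ i, (V M) [⋀^Fin i]→ₗ[ℂ] ℂ :=
  fun i => match i with
  | 2 => Gab M a b
  | _ => 0

def Phi (M : ℕ) (a b : Fin M) : ExteriorAlgebra ℂ (V M) →ₗ[ℂ] ℂ :=
  ExteriorAlgebra.liftAlternating (famG M a b)

theorem Phi_mul (M : ℕ) (a b : Fin M) (v w : V M) :
    Phi M a b (ι ℂ v * ι ℂ w) = v a * w b - v b * w a := by
  rw [Phi, liftAlternating_ι_mul, liftAlternating_ι]
  show ((famG M a b 2).curryLeft v) ![w] = _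
  simp [famG, Gab, pick, Matrix.det_fin_two, AlternatingMap.curryLeft_apply_apply]
  change Matrix.det (Matrix.of ![![v a, v b], ![w a, w b]]) = _
  rw [Matrix.det_fin_two_of]


/-- 0-indexed basis vector -/
def es (M j : ℕ) : V M := stdVec M (j+1)

lemma es_eq_single {M j : ℕ} (h : j < M) :
    es M j = EuclideanSpace.single (⟨j, h⟩ : Fin M) 1 := by
  rw [es, stdVec, dif_pos (by omega)]
  congr

lemma es_apply {M j : ℕ} (h : j < M) (a : Fin M) :
    es M j a = if a = (⟨j, h⟩ : Fin M) then 1 else 0 := by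
  rw [es_eq_single h]
  simp [EuclideanSpace.single_apply, eq_comm]

/-- matrix of a linear map on V M -/
def Wm (M : ℕ) (W : V M →ₗ[ℂ] V M) : Matrix (Fin M) (Fin M) ℂ :=
  Matrix.of fun a p => W (EuclideanSpace.single p 1) a

lemma euclid_decomp {M : ℕ} (v : V M) : v = ∑ p, v p • EuclideanSpace.single p (1:ℂ) := by
  ext a
  rw [show ((∑ p, v p • EuclideanSpace.single p (1:ℂ)) a) = ∑ p, (v p • EuclideanSpace.single p (1:ℂ)) a from by rw [WithLp.ofLp_sum, Finset.sum_apply]]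
  simp [EuclideanSpace.single_apply]

lemma Wm_apply {M : ℕ} (W : V M →ₗ[ℂ] V M) (v : V M) (a : Fin M) :
    W v a = ∑ p, Wm M W a p * v p := by
  have h1 : W v = ∑ p, v p • W (EuclideanSpace.single p (1:ℂ)) := by
    conv_lhs => rw [euclid_decomp v]
    simp only [map_sum, _root_.map_smul]
  rw [h1, show ((∑ p, v p • W (EuclideanSpace.single p (1:ℂ))) a) = ∑ p, (v p • W (EuclideanSpace.single p (1:ℂ))) a from by rw [WithLp.ofLp_sum, Finset.sum_apply]]
  simp [Wm, mul_comm]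

/-- the rank-two antisymmetric matrix v ⊗ w − w ⊗ v -/
def Tm (M : ℕ) (v w : V M) : Matrix (Fin M) (Fin M) ℂ :=
  Matrix.of fun a b => v a * w b - v b * w a

lemma Tm_conj {M : ℕ} (W : V M →ₗ[ℂ] V M) (v w : V M) :
    Wm M W * Tm M v w * (Wm M W)ᵀ = Tm M (W v) (W w) := by
  ext a b
  simp only [Matrix.mul_apply, Matrix.transpose_apply, Tm, Matrix.of_apply]
  have inner : ∀ q : Fin M, (∑ p, Wm M W a p * (v p * w q - v q * w p))
      = (W v a) * w q - v q * (W w a) := by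
    intro q
    calc ∑ p, Wm M W a p * (v p * w q - v q * w p)
        = ∑ p, (Wm M W a p * v p * w q - v q * (Wm M W a p * w p)) :=
          Finset.sum_congr rfl fun p _ => by ring
      _ = (∑ p, Wm M W a p * v p) * w q - v q * ∑ p, Wm M W a p * w p := by
          rw [Finset.sum_sub_distrib, Finset.sum_mul, Finset.mul_sum]
      _ = W v a * w q - v q * W w a := by rw [← Wm_apply, ← Wm_apply]
  simp only [inner]
  calc ∑ q, (W v a * w q - v q * W w a) * Wm M W b q
      = ∑ q, (W v a * (Wm M W b q * w q) - W w a * (Wm M W b q * v q)) :=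
        Finset.sum_congr rfl fun q _ => by ring
    _ = W v a * (∑ q, Wm M W b q * w q) - W w a * (∑ q, Wm M W b q * v q) := by
        rw [Finset.sum_sub_distrib, Finset.mul_sum, Finset.mul_sum]
    _ = W v a * W w b - W w a * W v b := by rw [← Wm_apply, ← Wm_apply]
    _ = W v a * W w b - W v b * W w a := by ring

lemma Wm_unitary {M : ℕ} (W : V M ≃ₗᵢ[ℂ] V M) :
    (Wm M W.toLinearEquiv.toLinearMap)ᴴ * Wm M W.toLinearEquiv.toLinearMap = 1 := by
  ext a b
  simp only [Matrix.mul_apply, Matrix.conjTranspose_apply, Wm, Matrix.of_apply]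
  have h := W.inner_map_map (EuclideanSpace.single a (1:ℂ)) (EuclideanSpace.single b 1)
  simp only [PiLp.inner_apply, RCLike.inner_apply, starRingEnd_apply] at h
  simp only [LinearEquiv.coe_coe, LinearIsometryEquiv.coe_toLinearEquiv]
  rw [show (∑ x, star ((W (EuclideanSpace.single a 1)).ofLp x) * (W (EuclideanSpace.single b 1)).ofLp x) = ∑ x, (W (EuclideanSpace.single b 1)).ofLp x * star ((W (EuclideanSpace.single a 1)).ofLp x) from Finset.sum_congr rfl fun _ _ => mul_comm _ _, h]
  simp [EuclideanSpace.single_apply, Matrix.one_apply, apply_ite, eq_comm]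

lemma es_star {M p : ℕ} (a : Fin M) : star (es M p a) = es M p a := by
  rw [es, stdVec]
  split_ifs with h
  · simp [EuclideanSpace.single_apply, apply_ite]
  · simp

lemma filter_val_eq {M p : ℕ} (hp : p < M) :
    Finset.filter (fun x : Fin M => (x:ℕ) = p) Finset.univ = {(⟨p, hp⟩ : Fin M)} := by
  ext x; simp [Fin.ext_iff]

lemma Tm_mul_conj_self {M p q : ℕ} (hp : p < M) (hq : q < M) (hpq : p ≠ q) :
    Tm M (es M p) (es M q) * (Tm M (es M p) (es M q))ᴴ =
      Matrix.diagonal (fun a : Fin M => if (a:ℕ) = p ∨ (a:ℕ) = q then 1 else 0) := by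
  ext a b
  simp only [Matrix.mul_apply, Matrix.conjTranspose_apply, Tm, Matrix.of_apply,
    star_sub, star_mul', es_star, es_apply hp, es_apply hq]
  simp only [mul_ite, ite_mul, one_mul, mul_one, mul_zero, zero_mul, sub_mul, mul_sub]
  simp only [Finset.sum_sub_distrib, Finset.sum_ite_eq', Finset.mem_univ, if_true]
  simp only [Matrix.diagonal_apply]
  have hPQ : (⟨p, hp⟩ : Fin M) ≠ ⟨q, hq⟩ := by simp [Fin.mk.injEq]; omega
  split_ifs <;> simp_all [Fin.ext_iff, filter_val_eq hp, filter_val_eq hq] <;> omega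

lemma Tm_mul_conj_disj {M p q r s : ℕ} (hp : p < M) (hq : q < M) (hr : r < M) (hs : s < M)
    (h1 : p ≠ r) (h2 : p ≠ s) (h3 : q ≠ r) (h4 : q ≠ s) :
    Tm M (es M p) (es M q) * (Tm M (es M r) (es M s))ᴴ = 0 := by
  ext a b
  simp only [Matrix.mul_apply, Matrix.conjTranspose_apply, Tm, Matrix.of_apply,
    star_sub, star_mul', es_star, es_apply hp, es_apply hq, es_apply hr, es_apply hs]
  simp only [mul_ite, ite_mul, one_mul, mul_one, mul_zero, zero_mul, sub_mul, mul_sub]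
  simp only [Finset.sum_sub_distrib, Finset.sum_ite_eq', Finset.mem_univ, if_true]
  simp only [Matrix.zero_apply]
  split_ifs <;> simp_all [Fin.ext_iff] <;> omega

def Amat (M k : ℕ) (c : ℕ → ℝ) : Matrix (Fin M) (Fin M) ℂ :=
  ∑ i ∈ Icc 1 k, ((c i : ℝ) : ℂ) • Tm M (es M (2*i-2)) (es M (2*i-1))

lemma Amat_mul_conj {M k : ℕ} (c : ℕ → ℝ) (hk : 2*k ≤ M) :
    Amat M k c * (Amat M k c)ᴴ =
      Matrix.diagonal (fun j : Fin M =>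
        if (j:ℕ) < 2*k then (((c ((j:ℕ)/2+1)) : ℂ))^2 else 0) := by
  have hAH : (Amat M k c)ᴴ = ∑ j ∈ Icc 1 k, ((c j : ℝ) : ℂ) •
      (Tm M (es M (2*j-2)) (es M (2*j-1)))ᴴ := by
    rw [Amat, Matrix.conjTranspose_sum]
    exact Finset.sum_congr rfl fun j _ => by
      rw [Matrix.conjTranspose_smul, Complex.star_def, Complex.conj_ofReal]
  rw [hAH, Amat, Matrix.sum_mul]
  have step : ∀ i ∈ Icc 1 k,
      (((c i : ℝ) : ℂ) • Tm M (es M (2*i-2)) (es M (2*i-1))) *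
        (∑ j ∈ Icc 1 k, ((c j : ℝ) : ℂ) • (Tm M (es M (2*j-2)) (es M (2*j-1)))ᴴ)
      = ((c i : ℂ)^2) • (Tm M (es M (2*i-2)) (es M (2*i-1)) *
          (Tm M (es M (2*i-2)) (es M (2*i-1)))ᴴ) := by
    intro i hi
    obtain ⟨hi1, hi2⟩ := mem_Icc.1 hi
    rw [Matrix.mul_sum]
    rw [Finset.sum_eq_single_of_mem i hi]
    · rw [smul_mul_assoc, Matrix.mul_smul, smul_smul]; ring_nf
    · intro j hj hji
      obtain ⟨hj1, hj2⟩ := mem_Icc.1 hj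
      rw [smul_mul_assoc, Matrix.mul_smul, smul_smul]
      rw [Tm_mul_conj_disj (by omega) (by omega) (by omega) (by omega)
        (by omega) (by omega) (by omega) (by omega)]
      simp
  rw [Finset.sum_congr rfl step]
  rw [Finset.sum_congr rfl (fun i hi => by
    obtain ⟨hi1, hi2⟩ := mem_Icc.1 hi
    rw [Tm_mul_conj_self (by omega : 2*i-2 < M) (by omega : 2*i-1 < M) (by omega)])]
  ext a b
  by_cases hab : a = b
  · subst hab
    simp only [Matrix.sum_apply, Matrix.smul_apply, Matrix.diagonal_apply_eq, smul_eq_mul]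
    by_cases ha : (a:ℕ) < 2*k
    · rw [if_pos ha]
      rw [Finset.sum_eq_single_of_mem ((a:ℕ)/2 + 1) (mem_Icc.2 (by omega))]
      · rw [if_pos (by omega)]; ring
      · intro j hj hji
        obtain ⟨hj1, hj2⟩ := mem_Icc.1 hj
        rw [if_neg (by omega)]; ring
    · rw [if_neg ha]
      apply Finset.sum_eq_zero
      intro j hj
      obtain ⟨hj1, hj2⟩ := mem_Icc.1 hj
      rw [if_neg (by omega)]; ring
  · simp only [Matrix.sum_apply, Matrix.smul_apply, Matrix.diagonal_apply_ne _ hab,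
      smul_eq_mul]
    apply Finset.sum_eq_zero
    intro j hj
    simp

lemma trace_conj_pow {n : ℕ} (Q P : Matrix (Fin n) (Fin n) ℂ) (hQ : Qᴴ * Q = 1) (m : ℕ) :
    ((Q * P * Qᴴ)^m).trace = (P^m).trace := by
  have hQQ : Q * Qᴴ = 1 := mul_eq_one_comm.mp hQ
  have hpow : ∀ m : ℕ, (Q * P * Qᴴ)^m = Q * P^m * Qᴴ := by
    intro m
    induction m with
    | zero => simp [hQQ]
    | succ l ih =>
      rw [pow_succ, ih, pow_succ]
      calc Q * P^l * Qᴴ * (Q * P * Qᴴ) = Q * P^l * (Qᴴ * Q) * P * Qᴴ := by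
            noncomm_ring
        _ = Q * (P^l * P) * Qᴴ := by rw [hQ]; noncomm_ring
  rw [hpow, Matrix.trace_mul_cycle, hQ, Matrix.one_mul]

lemma sum_range_two_mul (g : ℕ → ℂ) : ∀ k : ℕ,
    ∑ j ∈ range (2*k), g (j/2) = 2 * ∑ i ∈ range k, g i := by
  intro k
  induction k with
  | zero => simp
  | succ l ih =>
    have h2 : 2*(l+1) = (2*l + 1) + 1 := by ring
    rw [h2, Finset.sum_range_succ, Finset.sum_range_succ, ih, Finset.sum_range_succ]
    have e1 : (2*l + 1)/2 = l := by omega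
    have e2 : (2*l)/2 = l := by omega
    rw [e1, e2]
    ring

lemma diag_pow_sum {M k : ℕ} (c : ℕ → ℝ) (hk : 2*k ≤ M) (m : ℕ) (hm : 1 ≤ m) :
    ∑ j : Fin M, ((if (j:ℕ) < 2*k then ((c ((j:ℕ)/2+1) : ℂ))^2 else 0)^m)
      = 2 * ∑ i ∈ Icc 1 k, ((c i : ℂ)^2)^m := by
  rw [Fin.sum_univ_eq_sum_range (fun j => (if j < 2*k then ((c (j/2+1) : ℂ))^2 else 0)^m) M]
  rw [Finset.range_eq_Ico, ← Finset.sum_Ico_consecutive _ (Nat.zero_le (2*k)) hk]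
  have h2 : ∑ j ∈ Finset.Ico (2*k) M, (if j < 2*k then ((c (j/2+1) : ℂ))^2 else 0)^m = 0 := by
    apply Finset.sum_eq_zero
    intro j hj
    rw [if_neg (by simp at hj; omega)]
    exact zero_pow (by omega)
  rw [h2, add_zero]
  have h1 : ∑ j ∈ Finset.Ico 0 (2*k), (if j < 2*k then ((c (j/2+1) : ℂ))^2 else 0)^m
      = ∑ j ∈ range (2*k), (fun i => ((c (i+1) : ℂ)^2)^m) (j/2) := by
    rw [← Finset.range_eq_Ico]
    apply Finset.sum_congr rfl
    intro j hj
    rw [if_pos (Finset.mem_range.1 hj)]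
  rw [h1, sum_range_two_mul (fun i => ((c (i+1) : ℂ)^2)^m) k]
  congr 1
  rw [show Icc 1 k = Finset.Ico 1 (k+1) from by rw [Finset.Ico_add_one_right_eq_Icc],
    Finset.sum_Ico_eq_sum_range]
  simp only [Nat.add_sub_cancel]
  exact Finset.sum_congr rfl fun i _ => by rw [add_comm 1 i]

set_option maxHeartbeats 1000000 in
/-- (Uniqueness of the canonical form for 2-vectors.) If a
2-vector `ψ` is LU-equivalent to both `Σ_{i=1}^{k} c_i · e_{2i-1} ∧ e_{2i}`
and `Σ_{i=1}^{k'} c'_i · e_{2i-1} ∧ e_{2i}` with `c_1 ≥ ⋯ ≥ c_k > 0` and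
`c'_1 ≥ ⋯ ≥ c'_{k'} > 0`, then `k = k'` and `c_i = c'_i` for `1 ≤ i ≤ k`. -/
theorem two_vector_canonical_form_unique (M : ℕ)
    (ψ : ExteriorAlgebra ℂ (V M)) (hψ : ψ ∈ ⋀[ℂ]^2 (V M))
    (U U' : V M ≃ₗᵢ[ℂ] V M) (k k' : ℕ) (c c' : ℕ → ℝ)
    (hk : 2 * k ≤ M) (hk' : 2 * k' ≤ M)
    (hmono : ∀ i j : ℕ, 1 ≤ i → i ≤ j → j ≤ k → c j ≤ c i)
    (hmono' : ∀ i j : ℕ, 1 ≤ i → i ≤ j → j ≤ k' → c' j ≤ c' i)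
    (hpos : ∀ i : ℕ, 1 ≤ i → i ≤ k → 0 < c i)
    (hpos' : ∀ i : ℕ, 1 ≤ i → i ≤ k' → 0 < c' i)
    (hform : luMap M U ψ = ∑ i ∈ Finset.Icc 1 k, (c i : ℂ) •
      (ExteriorAlgebra.ι ℂ (stdVec M (2 * i - 1)) * ExteriorAlgebra.ι ℂ (stdVec M (2 * i))))
    (hform' : luMap M U' ψ = ∑ i ∈ Finset.Icc 1 k', (c' i : ℂ) •
      (ExteriorAlgebra.ι ℂ (stdVec M (2 * i - 1)) * ExteriorAlgebra.ι ℂ (stdVec M (2 * i)))) :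
    k = k' ∧ ∀ i : ℕ, 1 ≤ i → i ≤ k → c i = c' i := by
  classical
  set Wiso : V M ≃ₗᵢ[ℂ] V M := U.symm.trans U' with hWiso
  set Wl : V M →ₗ[ℂ] V M := Wiso.toLinearEquiv.toLinearMap with hWl
  have hcomp : luMap M Wiso (luMap M U ψ) = luMap M U' ψ := by
    rw [← AlgHom.comp_apply]
    have hmaps : (luMap M Wiso).comp (luMap M U) = luMap M U' := by
      unfold luMap
      rw [ExteriorAlgebra.map_comp_map]
      congr 1
      apply LinearMap.ext
      intro x
      simp [Wiso]
    rw [hmaps]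
  have eq0 : ∑ i ∈ Finset.Icc 1 k, (c i : ℂ) •
      (ExteriorAlgebra.ι ℂ (Wl (stdVec M (2 * i - 1))) *
        ExteriorAlgebra.ι ℂ (Wl (stdVec M (2 * i)))) =
      ∑ i ∈ Finset.Icc 1 k', (c' i : ℂ) •
      (ExteriorAlgebra.ι ℂ (stdVec M (2 * i - 1)) * ExteriorAlgebra.ι ℂ (stdVec M (2 * i))) := by
    have h := congrArg (luMap M Wiso) hform
    rw [hcomp, hform'] at h
    rw [map_sum] at h
    simp only [_root_.map_smul, _root_.map_mul] at h
    simp only [luMap, ExteriorAlgebra.map_apply_ι] at h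
    exact h.symm
  have hstd1 : ∀ i : ℕ, 1 ≤ i → stdVec M (2 * i - 1) = es M (2 * i - 2) := by
    intro i hi
    show stdVec M (2 * i - 1) = stdVec M (2 * i - 2 + 1)
    rw [show 2 * i - 2 + 1 = 2 * i - 1 from by omega]
  have hstd2 : ∀ i : ℕ, 1 ≤ i → stdVec M (2 * i) = es M (2 * i - 1) := by
    intro i hi
    show stdVec M (2 * i) = stdVec M (2 * i - 1 + 1)
    rw [show 2 * i - 1 + 1 = 2 * i from by omega]
  have eq1 : ∑ i ∈ Finset.Icc 1 k, (c i : ℂ) •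
      (ExteriorAlgebra.ι ℂ (Wl (es M (2 * i - 2))) *
        ExteriorAlgebra.ι ℂ (Wl (es M (2 * i - 1)))) =
      ∑ i ∈ Finset.Icc 1 k', (c' i : ℂ) •
      (ExteriorAlgebra.ι ℂ (es M (2 * i - 2)) * ExteriorAlgebra.ι ℂ (es M (2 * i - 1))) := by
    have e1 : ∑ i ∈ Finset.Icc 1 k, (c i : ℂ) •
        (ExteriorAlgebra.ι ℂ (Wl (es M (2 * i - 2))) *
          ExteriorAlgebra.ι ℂ (Wl (es M (2 * i - 1)))) =
        ∑ i ∈ Finset.Icc 1 k, (c i : ℂ) •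
        (ExteriorAlgebra.ι ℂ (Wl (stdVec M (2 * i - 1))) *
          ExteriorAlgebra.ι ℂ (Wl (stdVec M (2 * i)))) := by
      apply Finset.sum_congr rfl
      intro i hi
      obtain ⟨hi1, _⟩ := Finset.mem_Icc.1 hi
      rw [hstd1 i hi1, hstd2 i hi1]
    rw [e1, eq0]
    apply Finset.sum_congr rfl
    intro i hi
    obtain ⟨hi1, _⟩ := Finset.mem_Icc.1 hi
    rw [hstd1 i hi1, hstd2 i hi1]
  -- matrix identity
  have key : ∑ i ∈ Finset.Icc 1 k, (c i : ℂ) •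
      Tm M (Wl (es M (2 * i - 2))) (Wl (es M (2 * i - 1))) = Amat M k' c' := by
    ext a b
    have h := congrArg (Phi M a b) eq1
    rw [map_sum, map_sum] at h
    simp only [_root_.map_smul, Phi_mul, smul_eq_mul] at h
    rw [Amat]
    simp only [Matrix.sum_apply, Matrix.smul_apply, Tm, Matrix.of_apply, smul_eq_mul]
    exact h
  have hB : Amat M k' c' = Wm M Wl * Amat M k c * (Wm M Wl)ᵀ := by
    rw [← key, Amat, Matrix.mul_sum, Matrix.sum_mul]
    apply Finset.sum_congr rfl
    intro i _
    rw [Matrix.mul_smul, Matrix.smul_mul, Tm_conj]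
  have hQ : (Wm M Wl)ᴴ * Wm M Wl = 1 := Wm_unitary Wiso
  have hct : ((Wm M Wl)ᵀ)ᴴ = ((Wm M Wl)ᴴ)ᵀ := by
    ext i j; simp [Matrix.conjTranspose_apply, Matrix.transpose_apply]
  have hQt : (Wm M Wl)ᵀ * ((Wm M Wl)ᵀ)ᴴ = 1 := by
    rw [hct, ← Matrix.transpose_mul, hQ, Matrix.transpose_one]
  have hBB : Amat M k' c' * (Amat M k' c')ᴴ =
      Wm M Wl * (Amat M k c * (Amat M k c)ᴴ) * (Wm M Wl)ᴴ := by
    rw [hB]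
    calc Wm M Wl * Amat M k c * (Wm M Wl)ᵀ *
          (Wm M Wl * Amat M k c * (Wm M Wl)ᵀ)ᴴ
        = Wm M Wl * Amat M k c * ((Wm M Wl)ᵀ * ((Wm M Wl)ᵀ)ᴴ) *
            ((Amat M k c)ᴴ * (Wm M Wl)ᴴ) := by
          simp only [Matrix.conjTranspose_mul, Matrix.mul_assoc]
      _ = Wm M Wl * (Amat M k c * (Amat M k c)ᴴ) * (Wm M Wl)ᴴ := by
          rw [hQt, Matrix.mul_one]
          simp only [Matrix.mul_assoc]
  have htr : ∀ m : ℕ, 1 ≤ m →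
      ∑ i ∈ Finset.Icc 1 k, ((c i)^2)^m = ∑ i ∈ Finset.Icc 1 k', ((c' i)^2)^m := by
    intro m hm
    have h := trace_conj_pow (Wm M Wl) (Amat M k c * (Amat M k c)ᴴ) hQ m
    rw [← hBB] at h
    rw [Amat_mul_conj c hk, Amat_mul_conj c' hk'] at h
    rw [Matrix.diagonal_pow, Matrix.diagonal_pow, Matrix.trace_diagonal,
      Matrix.trace_diagonal] at h
    simp only [Pi.pow_apply] at h
    rw [diag_pow_sum c' hk' m hm, diag_pow_sum c hk m hm] at h
    have h2 : (∑ i ∈ Finset.Icc 1 k, ((c i : ℂ)^2)^m)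
        = ∑ i ∈ Finset.Icc 1 k', ((c' i : ℂ)^2)^m :=
      mul_left_cancel₀ (two_ne_zero (α := ℂ)) h.symm
    have h4 : ((∑ i ∈ Finset.Icc 1 k, ((c i)^2)^m : ℝ) : ℂ)
        = ((∑ i ∈ Finset.Icc 1 k', ((c' i)^2)^m : ℝ) : ℂ) := by
      push_cast
      exact_mod_cast h2
    exact Complex.ofReal_inj.1 h4
  obtain ⟨hkk, hcc⟩ := powersum_unique k k' (fun i => (c i)^2) (fun i => (c' i)^2)
    (fun i j h1 h2 h3 => by
      have := hmono i j h1 h2 h3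
      have hpi := hpos i h1 (le_trans h2 h3)
      have hpj := hpos j (le_trans h1 h2) h3
      show c j ^ 2 ≤ c i ^ 2
      nlinarith)
    (fun i j h1 h2 h3 => by
      have := hmono' i j h1 h2 h3
      have hpi := hpos' i h1 (le_trans h2 h3)
      have hpj := hpos' j (le_trans h1 h2) h3
      show c' j ^ 2 ≤ c' i ^ 2
      nlinarith)
    (fun i h1 h2 => by have := hpos i h1 h2; show (0:ℝ) < c i ^ 2; positivity)
    (fun i h1 h2 => by have := hpos' i h1 h2; show (0:ℝ) < c' i ^ 2; positivity)
    htr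
  refine ⟨hkk, fun i h1 h2 => ?_⟩
  have hsq := hcc i h1 h2
  have hsq' : c i ^ 2 = c' i ^ 2 := hsq
  have hpi := hpos i h1 h2
  have hpi' := hpos' i h1 (by omega)
  apply le_antisymm <;> nlinarith
end
end

section
/- Let V be a complex inner product space of dimension 5 with a fixed orthonormal basis e_1, …, e_5, and let ψ ∈ ⋀³V. Suppose U and U' are unitary operators on V and c_1 ≥ c_2 ≥ 0, c'_1 ≥ c'_2 ≥ 0 are real numbers such that (⋀³U) ψ = (c_1 · e_1 ∧ e_2 + c_2 · e_3 ∧ e_4) ∧ e_5 and (⋀³U') ψ = (c'_1 · e_1 ∧ e_2 + c'_2 · e_3 ∧ e_4) ∧ e_5. Then c_1 = c'_1 and c_2 = c'_2. -/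
open ExteriorAlgebra Finset

noncomputable section

/-! ### Auxiliary machinery for the uniqueness proof -/

open Matrix

/-- The standard basis of `V 5`. -/
def B5 : Module.Basis (Fin 5) ℂ (V 5) := (EuclideanSpace.basisFun (Fin 5) ℂ).toBasis

/-- The linear functional extracting the `e₁ ∧ ⋯ ∧ e₅`-coefficient on `⋀⁵ V`
(and vanishing on the other graded pieces). -/
def lam : ExteriorAlgebra ℂ (V 5) →ₗ[ℂ] ℂ :=
  ExteriorAlgebra.liftAlternating (fun i => if h : i = 5 then h ▸ B5.det else 0)

lemma lam_iMulti (v : Fin 5 → V 5) : lam (ιMulti ℂ 5 v) = B5.det v := by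
  rw [lam, liftAlternating_apply_ιMulti]; simp

lemma prod5 (v : Fin 5 → V 5) :
    ι ℂ (v 0) * ι ℂ (v 1) * ι ℂ (v 2) * ι ℂ (v 3) * ι ℂ (v 4) = ιMulti ℂ 5 v := by
  simp only [ιMulti_apply, List.ofFn_succ, List.ofFn_zero, List.prod_cons, List.prod_nil,
    Matrix.vecTail, Function.comp, mul_assoc, mul_one]
  rfl

lemma prod3 (v : Fin 3 → V 5) :
    ι ℂ (v 0) * ι ℂ (v 1) * ι ℂ (v 2) = ιMulti ℂ 3 v := by
  simp only [ιMulti_apply, List.ofFn_succ, List.ofFn_zero, List.prod_cons, List.prod_nil,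
    Matrix.vecTail, Function.comp, mul_assoc, mul_one]
  rfl

lemma lam_map (W : V 5 →ₗ[ℂ] V 5) (ψ : ExteriorAlgebra ℂ (V 5)) (hψ : ψ ∈ ⋀[ℂ]^3 (V 5))
    (a b : V 5) :
    lam (ExteriorAlgebra.map W (ψ * ι ℂ a * ι ℂ b)) =
      LinearMap.det W * lam (ψ * ι ℂ a * ι ℂ b) := by
  rw [← ExteriorAlgebra.ιMulti_span_fixedDegree] at hψ
  induction hψ using Submodule.span_induction with
  | mem x hx =>
    obtain ⟨v, rfl⟩ := hx
    have h5 : ιMulti ℂ 3 v * ι ℂ a * ι ℂ b = ιMulti ℂ 5 ![v 0, v 1, v 2, a, b] := by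
      rw [← prod3, ← prod5]; simp
    rw [h5, map_apply_ιMulti, lam_iMulti, lam_iMulti, Module.Basis.det_comp]
  | zero => simp
  | add x y _ _ hx hy => simp only [add_mul, map_add, hx, hy, mul_add]
  | smul c x _ hx => simp only [smul_mul_assoc, _root_.map_smul, hx, smul_eq_mul]; ring

lemma B5_repr (x : V 5) (i : Fin 5) : B5.repr x i = x i := by
  simp [B5, OrthonormalBasis.coe_toBasis_repr_apply, EuclideanSpace.basisFun_repr]

lemma symm_coord (W : V 5 ≃ₗᵢ[ℂ] V 5) (i k : Fin 5) :
    (W.symm (B5 i)) k = star ((W (B5 k)) i) := by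
  have h1 : (W.symm (B5 i)) k = inner ℂ (B5 k) (W.symm (B5 i)) := by
    simp [B5, EuclideanSpace.basisFun_apply, EuclideanSpace.inner_single_left]
  have h2 : (W (B5 k)) i = inner ℂ (B5 i) (W (B5 k)) := by
    simp [B5, EuclideanSpace.basisFun_apply, EuclideanSpace.inner_single_left]
  rw [h1, h2, ← W.inner_map_map (B5 k) (W.symm (B5 i)), W.apply_symm_apply]
  rw [← inner_conj_symm]
  rfl

/-- The matrix of `⋀⁵`-coefficients of `φ ∧ eᵢ ∧ eⱼ`. -/
def Mm (φ : ExteriorAlgebra ℂ (V 5)) : Matrix (Fin 5) (Fin 5) ℂ :=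
  Matrix.of fun i j => lam (φ * ι ℂ (B5 i) * ι ℂ (B5 j))

set_option maxRecDepth 8000 in
set_option maxHeartbeats 1000000 in
lemma Mm_transform (W : V 5 ≃ₗᵢ[ℂ] V 5) (φ : ExteriorAlgebra ℂ (V 5))
    (hφ : φ ∈ ⋀[ℂ]^3 (V 5)) :
    ∃ d : ℂ, ∃ C : Matrix (Fin 5) (Fin 5) ℂ, star d * d = 1 ∧ Cᴴ * C = 1 ∧
      Mm (luMap 5 W φ) = d • (C * Mm φ * Cᵀ) := by
  set Wl := W.toLinearEquiv.toLinearMap with hWl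
  set A : Matrix (Fin 5) (Fin 5) ℂ := LinearMap.toMatrix B5 B5 Wl with hA
  have hAentry : ∀ i k, A i k = (W (B5 k)) i := by
    intro i k
    rw [hA, LinearMap.toMatrix_apply, B5_repr]
    rfl
  have hAunit : Aᴴ * A = 1 := by
    ext k l
    simp only [Matrix.mul_apply, Matrix.conjTranspose_apply, hAentry, Matrix.one_apply]
    calc (∑ i, star (W (B5 k) i) * W (B5 l) i)
        = inner ℂ (W (B5 k)) (W (B5 l)) := by rw [PiLp.inner_apply]; simp [mul_comm]
      _ = inner ℂ (B5 k) (B5 l) := W.inner_map_map _ _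
      _ = if k = l then 1 else 0 := by
          have := (EuclideanSpace.basisFun (Fin 5) ℂ).orthonormal
          rw [orthonormal_iff_ite] at this
          simpa [B5] using this k l
  refine ⟨A.det, A.map star, ?_, ?_, ?_⟩
  · rw [← Matrix.det_conjTranspose, ← Matrix.det_mul, hAunit, Matrix.det_one]
  · have h1 : (A.map star)ᴴ = Aᵀ := by
      ext i j; simp [Matrix.conjTranspose_apply]
    rw [h1]
    have : Aᵀ * A.map star = (Aᴴ * A).map star := by
      ext i j
      simp only [Matrix.mul_apply, Matrix.map_apply, Matrix.transpose_apply,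
        Matrix.conjTranspose_apply, star_sum, star_mul', star_star, mul_comm]
    rw [this, hAunit]
    ext i j; simp [Matrix.one_apply]
  · ext i j
    have hdet : A.det = LinearMap.det Wl := LinearMap.det_toMatrix B5 Wl
    set f : Fin 5 → V 5 := fun i => W.symm (B5 i) with hf
    have hBf : ∀ i, ι ℂ (B5 i) = ExteriorAlgebra.map Wl (ι ℂ (f i)) := by
      intro i
      rw [map_apply_ι]
      exact congrArg _ (W.apply_symm_apply (B5 i)).symm
    have step1 : Mm (luMap 5 W φ) i j = A.det * lam (φ * ι ℂ (f i) * ι ℂ (f j)) := by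
      show lam (luMap 5 W φ * ι ℂ (B5 i) * ι ℂ (B5 j)) = _
      rw [hBf i, hBf j, luMap, ← _root_.map_mul, ← _root_.map_mul, lam_map Wl φ hφ, hdet]
    have hexp : ∀ i, ι ℂ (f i) = ∑ k, (A.map star) i k • ι ℂ (B5 k) := by
      intro i
      have : f i = ∑ k, (A.map star) i k • B5 k := by
        conv_lhs => rw [← B5.sum_repr (f i)]
        refine Finset.sum_congr rfl fun k _ => ?_
        rw [B5_repr]
        congr 1
        rw [Matrix.map_apply, hAentry, hf]
        exact symm_coord W i k
      rw [this, map_sum]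
      simp
    have Mm_apply : ∀ (x : ExteriorAlgebra ℂ (V 5)) k l,
        Mm x k l = lam (x * ι ℂ (B5 k) * ι ℂ (B5 l)) := fun _ _ _ => rfl
    have step2 : lam (φ * ι ℂ (f i) * ι ℂ (f j)) =
        ∑ k, ∑ l, (A.map star) i k * (Mm φ k l * (A.map star) j l) := by
      rw [hexp i, hexp j]
      simp only [Finset.mul_sum, Finset.sum_mul, smul_mul_assoc, mul_smul_comm, map_sum,
        _root_.map_smul, smul_eq_mul, Mm_apply]
      rw [Finset.sum_comm]
      exact Finset.sum_congr rfl fun k _ => Finset.sum_congr rfl fun l _ => by ring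
    rw [step1, step2]
    simp only [Matrix.smul_apply, Matrix.mul_apply, Matrix.transpose_apply, smul_eq_mul,
      Finset.sum_mul, Finset.mul_sum]
    rw [Finset.sum_comm]
    exact Finset.sum_congr rfl fun k _ => Finset.sum_congr rfl fun l _ => by ring

lemma det_perm (σ : Equiv.Perm (Fin 5)) :
    B5.det (fun k => B5 (σ k)) = ((Equiv.Perm.sign σ : ℤ) : ℂ) := by
  have h := B5.det.map_perm (⇑B5) σ
  have h2 : (fun k => B5 (σ k)) = ⇑B5 ∘ ⇑σ := rfl
  rw [h2, h, Module.Basis.det_self]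
  rcases Int.units_eq_one_or (Equiv.Perm.sign σ) with hs | hs <;> rw [hs] <;> simp

lemma det_dup' (v : Fin 5 → Fin 5) (h : ¬Function.Injective v) :
    B5.det (fun m => B5 (v m)) = 0 := by
  simp only [Function.Injective, not_forall] at h
  obtain ⟨a, b, hab, hne⟩ := h
  exact B5.det.map_eq_zero_of_eq _ (congrArg B5 hab) hne

def s1 : Equiv.Perm (Fin 5) := Equiv.swap 2 4 * Equiv.swap 4 3
def s2 : Equiv.Perm (Fin 5) := Equiv.swap 2 4
def s3 : Equiv.Perm (Fin 5) := Equiv.swap 0 2 * Equiv.swap 2 4 * Equiv.swap 4 1 * Equiv.swap 1 3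
def s4 : Equiv.Perm (Fin 5) := Equiv.swap 0 2 * Equiv.swap 2 4 * Equiv.swap 1 3

lemma D1a : B5.det (fun m => B5 (![0,1,4,2,3] m)) = 1 := by
  have h : (fun m => B5 (![0,1,4,2,3] m)) = fun k => B5 (s1 k) := by
    funext m; congr 1; revert m; decide
  rw [h, det_perm]
  have hs : Equiv.Perm.sign s1 = 1 := by decide
  rw [hs]; norm_num

lemma D1b : B5.det (fun m => B5 (![0,1,4,3,2] m)) = -1 := by
  have h : (fun m => B5 (![0,1,4,3,2] m)) = fun k => B5 (s2 k) := by
    funext m; congr 1; revert m; decide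
  rw [h, det_perm]
  have hs : Equiv.Perm.sign s2 = -1 := by decide
  rw [hs]; norm_num

lemma D2a : B5.det (fun m => B5 (![2,3,4,0,1] m)) = 1 := by
  have h : (fun m => B5 (![2,3,4,0,1] m)) = fun k => B5 (s3 k) := by
    funext m; congr 1; revert m; decide
  rw [h, det_perm]
  have hs : Equiv.Perm.sign s3 = 1 := by decide
  rw [hs]; norm_num

lemma D2b : B5.det (fun m => B5 (![2,3,4,1,0] m)) = -1 := by
  have h : (fun m => B5 (![2,3,4,1,0] m)) = fun k => B5 (s4 k) := by
    funext m; congr 1; revert m; decide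
  rw [h, det_perm]
  have hs : Equiv.Perm.sign s4 = -1 := by decide
  rw [hs]; norm_num

lemma stdVec_eq (n : ℕ) (h1 : 1 ≤ n) (h2 : n ≤ 5) :
    stdVec 5 n = B5 ⟨n-1, by omega⟩ := by
  rw [stdVec, dif_pos ⟨h1, h2⟩, B5]
  simp [EuclideanSpace.basisFun_apply]

/-- The canonical form `(c₁ e₁∧e₂ + c₂ e₃∧e₄) ∧ e₅`. -/
def canon (c₁ c₂ : ℝ) : ExteriorAlgebra ℂ (V 5) :=
  ((c₁ : ℂ) • (ExteriorAlgebra.ι ℂ (stdVec 5 1) * ExteriorAlgebra.ι ℂ (stdVec 5 2)) +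
   (c₂ : ℂ) • (ExteriorAlgebra.ι ℂ (stdVec 5 3) * ExteriorAlgebra.ι ℂ (stdVec 5 4))) *
  ExteriorAlgebra.ι ℂ (stdVec 5 5)

lemma canon_eq (c₁ c₂ : ℝ) : canon c₁ c₂ =
    (c₁ : ℂ) • (ι ℂ (B5 0) * ι ℂ (B5 1) * ι ℂ (B5 4)) +
    (c₂ : ℂ) • (ι ℂ (B5 2) * ι ℂ (B5 3) * ι ℂ (B5 4)) := by
  rw [canon, stdVec_eq 1 (by norm_num) (by norm_num), stdVec_eq 2 (by norm_num) (by norm_num),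
    stdVec_eq 3 (by norm_num) (by norm_num), stdVec_eq 4 (by norm_num) (by norm_num),
    stdVec_eq 5 (by norm_num) (by norm_num)]
  simp only [add_mul, smul_mul_assoc]
  rfl

lemma canon_mem (c₁ c₂ : ℝ) : canon c₁ c₂ ∈ ⋀[ℂ]^3 (V 5) := by
  rw [canon_eq]
  refine Submodule.add_mem _ (Submodule.smul_mem _ _ ?_) (Submodule.smul_mem _ _ ?_)
  · have h := prod3 ![B5 0, B5 1, B5 4]
    simp only [Matrix.cons_val_zero, Matrix.cons_val_one, Matrix.head_cons,
      Matrix.cons_val_two, Matrix.tail_cons] at h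
    rw [h]
    exact ExteriorAlgebra.ιMulti_range ℂ 3 ⟨_, rfl⟩
  · have h := prod3 ![B5 2, B5 3, B5 4]
    simp only [Matrix.cons_val_zero, Matrix.cons_val_one, Matrix.head_cons,
      Matrix.cons_val_two, Matrix.tail_cons] at h
    rw [h]
    exact ExteriorAlgebra.ιMulti_range ℂ 3 ⟨_, rfl⟩

set_option maxRecDepth 4000 in
lemma Mm_canon (c₁ c₂ : ℝ) (i j : Fin 5) : Mm (canon c₁ c₂) i j =
    (c₁ : ℂ) * B5.det (fun m => B5 (![0,1,4,i,j] m)) +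
    (c₂ : ℂ) * B5.det (fun m => B5 (![2,3,4,i,j] m)) := by
  have hv1 : (fun m => B5 (![0,1,4,i,j] m)) = ![B5 0, B5 1, B5 4, B5 i, B5 j] := by
    funext m; fin_cases m <;> rfl
  have hv2 : (fun m => B5 (![2,3,4,i,j] m)) = ![B5 2, B5 3, B5 4, B5 i, B5 j] := by
    funext m; fin_cases m <;> rfl
  have hmul : canon c₁ c₂ * ι ℂ (B5 i) * ι ℂ (B5 j) =
      (c₁ : ℂ) • ιMulti ℂ 5 ![B5 0, B5 1, B5 4, B5 i, B5 j] +
      (c₂ : ℂ) • ιMulti ℂ 5 ![B5 2, B5 3, B5 4, B5 i, B5 j] := by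
    rw [← prod5, ← prod5, canon_eq]
    simp only [Matrix.cons_val_zero, Matrix.cons_val_one, Matrix.head_cons,
      Matrix.cons_val_two, Matrix.cons_val_three, Matrix.cons_val_four, Matrix.tail_cons,
      Matrix.head_fin_const]
    simp only [add_mul, smul_mul_assoc]
  show lam (canon c₁ c₂ * ι ℂ (B5 i) * ι ℂ (B5 j)) = _
  rw [hmul, map_add, _root_.map_smul, _root_.map_smul, lam_iMulti, lam_iMulti, hv1, hv2]
  rfl

/-- The matrix `Mm` of the canonical form, explicitly. -/
def NN (c₁ c₂ : ℝ) : Matrix (Fin 5) (Fin 5) ℂ := Matrix.of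
    ![![0, (c₂:ℂ), 0, 0, 0], ![-(c₂:ℂ), 0, 0, 0, 0],
      ![0, 0, 0, (c₁:ℂ), 0], ![0, 0, -(c₁:ℂ), 0, 0], ![0,0,0,0,0]]
set_option maxRecDepth 8000 in
lemma Mm_canon_eq (c₁ c₂ : ℝ) : Mm (canon c₁ c₂) = NN c₁ c₂ := by
  have h00 : Mm (canon c₁ c₂) 0 0 = 0 := by rw [Mm_canon, det_dup' _ (by decide), det_dup' _ (by decide)]; ring
  have h01 : Mm (canon c₁ c₂) 0 1 = (c₂:ℂ) := by rw [Mm_canon, det_dup' _ (by decide), D2a]; ring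
  have h02 : Mm (canon c₁ c₂) 0 2 = 0 := by rw [Mm_canon, det_dup' _ (by decide), det_dup' _ (by decide)]; ring
  have h03 : Mm (canon c₁ c₂) 0 3 = 0 := by rw [Mm_canon, det_dup' _ (by decide), det_dup' _ (by decide)]; ring
  have h04 : Mm (canon c₁ c₂) 0 4 = 0 := by rw [Mm_canon, det_dup' _ (by decide), det_dup' _ (by decide)]; ring
  have h10 : Mm (canon c₁ c₂) 1 0 = -(c₂:ℂ) := by rw [Mm_canon, det_dup' _ (by decide), D2b]; ring
  have h11 : Mm (canon c₁ c₂) 1 1 = 0 := by rw [Mm_canon, det_dup' _ (by decide), det_dup' _ (by decide)]; ring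
  have h12 : Mm (canon c₁ c₂) 1 2 = 0 := by rw [Mm_canon, det_dup' _ (by decide), det_dup' _ (by decide)]; ring
  have h13 : Mm (canon c₁ c₂) 1 3 = 0 := by rw [Mm_canon, det_dup' _ (by decide), det_dup' _ (by decide)]; ring
  have h14 : Mm (canon c₁ c₂) 1 4 = 0 := by rw [Mm_canon, det_dup' _ (by decide), det_dup' _ (by decide)]; ring
  have h20 : Mm (canon c₁ c₂) 2 0 = 0 := by rw [Mm_canon, det_dup' _ (by decide), det_dup' _ (by decide)]; ring
  have h21 : Mm (canon c₁ c₂) 2 1 = 0 := by rw [Mm_canon, det_dup' _ (by decide), det_dup' _ (by decide)]; ring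
  have h22 : Mm (canon c₁ c₂) 2 2 = 0 := by rw [Mm_canon, det_dup' _ (by decide), det_dup' _ (by decide)]; ring
  have h23 : Mm (canon c₁ c₂) 2 3 = (c₁:ℂ) := by rw [Mm_canon, D1a, det_dup' _ (by decide)]; ring
  have h24 : Mm (canon c₁ c₂) 2 4 = 0 := by rw [Mm_canon, det_dup' _ (by decide), det_dup' _ (by decide)]; ring
  have h30 : Mm (canon c₁ c₂) 3 0 = 0 := by rw [Mm_canon, det_dup' _ (by decide), det_dup' _ (by decide)]; ring
  have h31 : Mm (canon c₁ c₂) 3 1 = 0 := by rw [Mm_canon, det_dup' _ (by decide), det_dup' _ (by decide)]; ring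
  have h32 : Mm (canon c₁ c₂) 3 2 = -(c₁:ℂ) := by rw [Mm_canon, D1b, det_dup' _ (by decide)]; ring
  have h33 : Mm (canon c₁ c₂) 3 3 = 0 := by rw [Mm_canon, det_dup' _ (by decide), det_dup' _ (by decide)]; ring
  have h34 : Mm (canon c₁ c₂) 3 4 = 0 := by rw [Mm_canon, det_dup' _ (by decide), det_dup' _ (by decide)]; ring
  have h40 : Mm (canon c₁ c₂) 4 0 = 0 := by rw [Mm_canon, det_dup' _ (by decide), det_dup' _ (by decide)]; ring
  have h41 : Mm (canon c₁ c₂) 4 1 = 0 := by rw [Mm_canon, det_dup' _ (by decide), det_dup' _ (by decide)]; ring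
  have h42 : Mm (canon c₁ c₂) 4 2 = 0 := by rw [Mm_canon, det_dup' _ (by decide), det_dup' _ (by decide)]; ring
  have h43 : Mm (canon c₁ c₂) 4 3 = 0 := by rw [Mm_canon, det_dup' _ (by decide), det_dup' _ (by decide)]; ring
  have h44 : Mm (canon c₁ c₂) 4 4 = 0 := by rw [Mm_canon, det_dup' _ (by decide), det_dup' _ (by decide)]; ring
  ext i j
  fin_cases i <;> fin_cases j
  exacts [h00, h01, h02, h03, h04, h10, h11, h12, h13, h14, h20, h21, h22, h23, h24, h30, h31, h32, h33, h34, h40, h41, h42, h43, h44]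

lemma trace_key {d : ℂ} {C M M' : Matrix (Fin 5) (Fin 5) ℂ} (hd : star d * d = 1)
    (hC : Cᴴ * C = 1) (hM : M' = d • (C * M * Cᵀ)) :
    (M' * M'ᴴ).trace = (M * Mᴴ).trace ∧
    ((M' * M'ᴴ) * (M' * M'ᴴ)).trace = ((M * Mᴴ) * (M * Mᴴ)).trace := by
  have hTT : Cᵀ * Cᵀᴴ = 1 := by
    ext i j
    calc (Cᵀ * Cᵀᴴ) i j = star ((Cᴴ * C) i j) := by
          simp only [Matrix.mul_apply, Matrix.conjTranspose_apply, Matrix.transpose_apply,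
            star_sum, star_mul', star_star, mul_comm]
      _ = (1 : Matrix (Fin 5) (Fin 5) ℂ) i j := by
          rw [hC]; simp [Matrix.one_apply, apply_ite]
  have key : M' * M'ᴴ = C * (M * Mᴴ) * Cᴴ := by
    rw [hM, Matrix.conjTranspose_smul, Matrix.smul_mul, Matrix.mul_smul, smul_smul,
      mul_comm d (star d), hd, one_smul, Matrix.conjTranspose_mul, Matrix.conjTranspose_mul]
    calc C * M * Cᵀ * (Cᵀᴴ * (Mᴴ * Cᴴ))
        = C * M * (Cᵀ * Cᵀᴴ) * (Mᴴ * Cᴴ) := by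
          simp only [Matrix.mul_assoc]
      _ = C * (M * Mᴴ) * Cᴴ := by rw [hTT, Matrix.mul_one]; simp only [Matrix.mul_assoc]
  constructor
  · rw [key, Matrix.trace_mul_cycle, ← Matrix.mul_assoc, hC, Matrix.one_mul]
  · rw [key]
    have : C * (M * Mᴴ) * Cᴴ * (C * (M * Mᴴ) * Cᴴ) =
        C * ((M * Mᴴ) * (M * Mᴴ)) * Cᴴ := by
      calc C * (M * Mᴴ) * Cᴴ * (C * (M * Mᴴ) * Cᴴ)
          = C * (M * Mᴴ) * (Cᴴ * C) * ((M * Mᴴ) * Cᴴ) := by simp only [Matrix.mul_assoc]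
        _ = _ := by rw [hC, Matrix.mul_one]; simp only [Matrix.mul_assoc]
    rw [this, Matrix.trace_mul_cycle, ← Matrix.mul_assoc, hC, Matrix.one_mul]

lemma NN_sq (c₁ c₂ : ℝ) : NN c₁ c₂ * (NN c₁ c₂)ᴴ = Matrix.of
    ![![(c₂:ℂ)^2, 0, 0, 0, 0], ![0, (c₂:ℂ)^2, 0, 0, 0],
      ![0, 0, (c₁:ℂ)^2, 0, 0], ![0, 0, 0, (c₁:ℂ)^2, 0], ![0,0,0,0,0]] := by
  ext i j
  fin_cases i <;> fin_cases j <;>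
    simp [NN, Matrix.mul_apply, Matrix.conjTranspose_apply, Fin.sum_univ_five,
      Complex.conj_ofReal, Matrix.vecHead, Matrix.vecTail] <;> ring

lemma trace1 (c₁ c₂ : ℝ) : (NN c₁ c₂ * (NN c₁ c₂)ᴴ).trace = 2*(c₁:ℂ)^2 + 2*(c₂:ℂ)^2 := by
  rw [NN_sq]
  simp [Matrix.trace, Matrix.diag, Fin.sum_univ_five, Matrix.vecHead, Matrix.vecTail]
  ring

lemma trace2 (c₁ c₂ : ℝ) : ((NN c₁ c₂ * (NN c₁ c₂)ᴴ) * (NN c₁ c₂ * (NN c₁ c₂)ᴴ)).trace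
    = 2*(c₁:ℂ)^4 + 2*(c₂:ℂ)^4 := by
  rw [NN_sq]
  simp [Matrix.trace, Matrix.diag, Matrix.mul_apply, Fin.sum_univ_five, Matrix.vecHead,
    Matrix.vecTail]
  ring

/-- (Uniqueness of the canonical form for 3-vectors in
dimension 5.) If `ψ ∈ ⋀³ V`, `dim V = 5`, is LU-equivalent to both
`(c₁ · e₁ ∧ e₂ + c₂ · e₃ ∧ e₄) ∧ e₅` and `(c'₁ · e₁ ∧ e₂ + c'₂ · e₃ ∧ e₄) ∧ e₅`
with `c₁ ≥ c₂ ≥ 0` and `c'₁ ≥ c'₂ ≥ 0`, then `c₁ = c'₁` and `c₂ = c'₂`. -/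
theorem three_vector_dim5_canonical_form_unique
    (ψ : ExteriorAlgebra ℂ (V 5)) (hψ : ψ ∈ ⋀[ℂ]^3 (V 5))
    (U U' : V 5 ≃ₗᵢ[ℂ] V 5) (c₁ c₂ c₁' c₂' : ℝ)
    (h1 : c₂ ≤ c₁) (h2 : 0 ≤ c₂) (h1' : c₂' ≤ c₁') (h2' : 0 ≤ c₂')
    (hform : luMap 5 U ψ =
      ((c₁ : ℂ) • (ExteriorAlgebra.ι ℂ (stdVec 5 1) * ExteriorAlgebra.ι ℂ (stdVec 5 2)) +
       (c₂ : ℂ) • (ExteriorAlgebra.ι ℂ (stdVec 5 3) * ExteriorAlgebra.ι ℂ (stdVec 5 4))) *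
      ExteriorAlgebra.ι ℂ (stdVec 5 5))
    (hform' : luMap 5 U' ψ =
      ((c₁' : ℂ) • (ExteriorAlgebra.ι ℂ (stdVec 5 1) * ExteriorAlgebra.ι ℂ (stdVec 5 2)) +
       (c₂' : ℂ) • (ExteriorAlgebra.ι ℂ (stdVec 5 3) * ExteriorAlgebra.ι ℂ (stdVec 5 4))) *
      ExteriorAlgebra.ι ℂ (stdVec 5 5)) :
    c₁ = c₁' ∧ c₂ = c₂' := by
  have hform2 : luMap 5 U ψ = canon c₁ c₂ := hform
  have hform2' : luMap 5 U' ψ = canon c₁' c₂' := hform'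
  set W : V 5 ≃ₗᵢ[ℂ] V 5 := U.symm.trans U' with hWdef
  have hcomp : luMap 5 W (canon c₁ c₂) = canon c₁' c₂' := by
    rw [← hform2, ← hform2']
    have h1 : luMap 5 W (luMap 5 U ψ) =
        ((luMap 5 W).comp (luMap 5 U)) ψ := rfl
    rw [h1, luMap, luMap, ExteriorAlgebra.map_comp_map]
    have h2 : W.toLinearEquiv.toLinearMap ∘ₗ U.toLinearEquiv.toLinearMap =
        U'.toLinearEquiv.toLinearMap :=
      LinearMap.ext fun x => congrArg U' (U.symm_apply_apply x)
    rw [h2]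
    rfl
  obtain ⟨d, C, hd, hC, hMM⟩ := Mm_transform W (canon c₁ c₂) (canon_mem c₁ c₂)
  rw [hcomp, Mm_canon_eq, Mm_canon_eq] at hMM
  obtain ⟨t1, t2⟩ := trace_key hd hC hMM
  rw [trace1, trace1] at t1
  rw [trace2, trace2] at t2
  have hs : 2*c₁'^2 + 2*c₂'^2 = 2*c₁^2 + 2*c₂^2 := by exact_mod_cast t1
  have hq : 2*c₁'^4 + 2*c₂'^4 = 2*c₁^4 + 2*c₂^4 := by exact_mod_cast t2
  have h4 : (c₁^2 - c₂^2)^2 = (c₁'^2 - c₂'^2)^2 := by nlinarith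
  have h5 : c₁^2 - c₂^2 = c₁'^2 - c₂'^2 :=
    (sq_eq_sq₀ (by nlinarith) (by nlinarith)).mp h4
  have e1 : c₁^2 = c₁'^2 := by linarith
  have e2 : c₂^2 = c₂'^2 := by linarith
  exact ⟨(sq_eq_sq₀ (by linarith) (by nlinarith)).mp e1, (sq_eq_sq₀ h2 h2').mp e2⟩
end
end

section
/- Let K and N be integers with K ≥ N ≥ 4. Then C(2K, N) - 2^N · C(K, N) > 4K(K-1). -/
lemma choose4_int (m : ℕ) (hm : 4 ≤ m) :
    (m.choose 4 : ℤ) * 24 = m * (m - 1) * (m - 2) * (m - 3) := by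
  have h1 : m.choose 1 = m := Nat.choose_one_right m
  have h2 : m.choose 2 * 2 = m.choose 1 * (m - 1) := Nat.choose_succ_right_eq m 1
  have h3 : m.choose 3 * 3 = m.choose 2 * (m - 2) := Nat.choose_succ_right_eq m 2
  have h4 : m.choose 4 * 4 = m.choose 3 * (m - 3) := Nat.choose_succ_right_eq m 3
  have hN : m.choose 4 * 24 = m * (m - 1) * (m - 2) * (m - 3) := by
    calc m.choose 4 * 24 = (m.choose 4 * 4) * 6 := by ring
    _ = (m.choose 3 * 3) * ((m - 3) * 2) := by rw [h4]; ring
    _ = (m.choose 2 * 2) * ((m - 2) * (m - 3)) := by rw [h3]; ring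
    _ = m.choose 1 * (m - 1) * (m - 2) * (m - 3) := by rw [h2]; ring
    _ = m * (m - 1) * (m - 2) * (m - 3) := by rw [h1]
  have := congrArg (Nat.cast : ℕ → ℤ) hN
  push_cast [Nat.cast_sub (show 1 ≤ m by omega), Nat.cast_sub (show 2 ≤ m by omega),
    Nat.cast_sub (show 3 ≤ m by omega)] at this
  linarith

/-- For integers `K ≥ N ≥ 4`, `C(2K, N) - 2^N · C(K, N) > 4K(K-1)`. -/
theorem choose_gap_even (K N : ℕ) (hN : 4 ≤ N) (hKN : N ≤ K) :
    (4 * K * (K - 1) : ℤ) <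
      ((2 * K).choose N : ℤ) - 2 ^ N * (K.choose N : ℤ) := by
  induction N with
  | zero => omega
  | succ n ih =>
    rcases Nat.lt_or_ge n 4 with h4 | h4
    · have hn : n = 3 := by omega
      subst hn
      have hA := choose4_int (2 * K) (by omega)
      have hB := choose4_int K (by omega)
      have hK4 : (4 : ℤ) ≤ (K : ℤ) := by exact_mod_cast hKN
      push_cast at hA hB
      norm_num
      have hkey : (0 : ℤ) < K * ((K : ℤ) - 1) * (4 * K - 15) := by
        apply mul_pos (mul_pos (by linarith) (by linarith)) (by linarith)
      nlinarith [hA, hB, hkey]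
    · have hf := ih h4 (by omega)
      have hn2K : n ≤ 2 * K := by omega
      have hnK : n ≤ K := by omega
      have e1 : ((2 * K).choose (n + 1) : ℤ) * (n + 1) = ((2 * K).choose n : ℤ) * (2 * K - n) := by
        have h := congrArg (Nat.cast : ℕ → ℤ) (Nat.choose_succ_right_eq (2 * K) n)
        push_cast [Nat.cast_sub hn2K] at h
        linarith
      have e2 : ((K).choose (n + 1) : ℤ) * (n + 1) = ((K).choose n : ℤ) * (K - n) := by
        have h := congrArg (Nat.cast : ℕ → ℤ) (Nat.choose_succ_right_eq K n)
        push_cast [Nat.cast_sub hnK] at h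
        linarith
      have hpos : (0 : ℤ) ≤ 2 ^ n * (K.choose n : ℤ) := by positivity
      have hKK : (n : ℤ) + 1 ≤ (K : ℤ) := by exact_mod_cast hKN
      have hstep : ((n : ℤ) + 1) ≤ 2 * K - n := by linarith
      have hnpos : (0 : ℤ) < (n : ℤ) + 1 := by positivity
      have hnn : (0 : ℤ) ≤ (n : ℤ) := by positivity
      have key : ((n : ℤ) + 1) * (((2 * K).choose (n + 1) : ℤ) - 2 ^ (n + 1) * (K.choose (n + 1) : ℤ))
          = (2 * K - n) * (((2 * K).choose n : ℤ) - 2 ^ n * (K.choose n : ℤ))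
            + n * (2 ^ n * (K.choose n : ℤ)) := by
        linear_combination e1 - (2 : ℤ) ^ (n + 1) * e2
      have hf0 : (0 : ℤ) < ((2 * K).choose n : ℤ) - 2 ^ n * (K.choose n : ℤ) := by
        nlinarith [hf, hKK, hnn]
      have hgoal : ((n : ℤ) + 1) * (4 * K * ((K : ℤ) - 1))
          < ((n : ℤ) + 1) * (((2 * K).choose (n + 1) : ℤ) - 2 ^ (n + 1) * (K.choose (n + 1) : ℤ)) := by
        rw [key]
        have t1 : (0 : ℤ) ≤ (2 * (K : ℤ) - n - (n + 1)) *
            (((2 * K).choose n : ℤ) - 2 ^ n * (K.choose n : ℤ)) :=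
          mul_nonneg (by linarith) hf0.le
        have t2 : (0 : ℤ) ≤ (n : ℤ) * (2 ^ n * (K.choose n : ℤ)) := mul_nonneg hnn hpos
        nlinarith [t1, t2, mul_lt_mul_of_pos_left hf hnpos]
      have := (mul_lt_mul_iff_right₀ hnpos).mp hgoal
      push_cast at this ⊢
      linarith
end

section
/- Let K and N be integers with N ≥ 4 and 2K + 1 ≥ 2N. Then 4K² + 2^N · C(K, N) + 2^{N-1} · C(K, N-1) < C(2K+1, N). -/
lemma lemA (m : ℕ) : ∀ K : ℕ, 2 ^ m * K.choose m ≤ (2 * K + 1).choose m := by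
  induction m with
  | zero => simp
  | succ m ih =>
    intro K
    have h1 := Nat.choose_succ_right_eq (2 * K + 1) m
    have h2 := Nat.choose_succ_right_eq K m
    have key : 2 ^ (m+1) * K.choose (m+1) * (m+1) ≤ (2*K+1).choose (m+1) * (m+1) := by
      calc 2 ^ (m+1) * K.choose (m+1) * (m+1)
          = 2 ^ m * (K.choose (m+1) * (m+1)) * 2 := by ring
        _ = 2 ^ m * (K.choose m * (K - m)) * 2 := by rw [h2]
        _ = (2 ^ m * K.choose m) * (2 * (K - m)) := by ring
        _ ≤ (2*K+1).choose m * (2*K+1 - m) := Nat.mul_le_mul (ih K) (by omega)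
        _ = (2*K+1).choose (m+1) * (m+1) := h1.symm
    exact Nat.le_of_mul_le_mul_right key (Nat.succ_pos m)

lemma L2 (n : ℕ) : 2 * (n+1).choose 2 = (n+1) * n := by
  induction n with
  | zero => rfl
  | succ n ih =>
    rw [Nat.choose_succ_succ (n+1) 1]
    simp [Nat.choose_one_right]
    nlinarith [ih]

lemma L3 (n : ℕ) : 6 * (n+2).choose 3 = (n+2) * (n+1) * n := by
  induction n with
  | zero => rfl
  | succ n ih =>
    rw [Nat.choose_succ_succ (n+2) 2]
    have := L2 (n+1)
    nlinarith [ih, this]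

lemma L4 (n : ℕ) : 24 * (n+3).choose 4 = (n+3) * (n+2) * (n+1) * n := by
  induction n with
  | zero => rfl
  | succ n ih =>
    rw [Nat.choose_succ_succ (n+3) 3]
    have := L3 (n+1)
    nlinarith [ih, this]

lemma base4 (K : ℕ) (hK : 4 ≤ K) :
    4 * K ^ 2 + 2 ^ 4 * K.choose 4 + 2 ^ 3 * K.choose 3 < (2 * K + 1).choose 4 := by
  obtain ⟨k, rfl⟩ : ∃ k, K = k + 4 := ⟨K - 4, by omega⟩
  have h3 : 6 * (k+4).choose 3 = (k+4) * (k+3) * (k+2) := by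
    have := L3 (k+2); convert this using 3
  have h4 : 24 * (k+4).choose 4 = (k+4) * (k+3) * (k+2) * (k+1) := by
    have := L4 (k+1); convert this using 3
  have h5 : 24 * (2*(k+4)+1).choose 4 = (2*k+9) * (2*k+8) * (2*k+7) * (2*k+6) := by
    have := L4 (2*k+6); convert this using 3 <;> omega
  have key : 24 * (4 * (k+4) ^ 2 + 2 ^ 4 * (k+4).choose 4 + 2 ^ 3 * (k+4).choose 3)
      < 24 * ((2*(k+4)+1).choose 4) := by
    nlinarith [h3, h4, h5]
  omega

/-- For integers `N ≥ 4` and `2K + 1 ≥ 2N`,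
`4K² + 2^N · C(K, N) + 2^{N-1} · C(K, N-1) < C(2K+1, N)`. -/
theorem choose_gap_odd (K N : ℕ) (hN : 4 ≤ N) (hKN : 2 * N ≤ 2 * K + 1) :
    4 * K ^ 2 + 2 ^ N * K.choose N + 2 ^ (N - 1) * K.choose (N - 1) <
      (2 * K + 1).choose N := by
  revert hKN
  induction N, hN using Nat.le_induction with
  | base =>
    intro hKN
    have := base4 K (by omega)
    norm_num at this ⊢
    exact this
  | succ N hN ih =>
    intro hKN
    have hK : N + 1 ≤ K := by omega
    have ih' := ih (by omega)
    have hidx : N + 1 - 1 = N := rfl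
    rw [hidx]
    have key : (2*K+1).choose N + 2^(N+1) * K.choose (N+1) ≤ (2*K+1).choose (N+1) := by
      have h1 := Nat.choose_succ_right_eq (2*K+1) N
      have h2 := Nat.choose_succ_right_eq K N
      have hA := lemA N K
      have hmul : ((2*K+1).choose N + 2^(N+1) * K.choose (N+1)) * (N+1)
          ≤ (2*K+1).choose (N+1) * (N+1) := by
        calc ((2*K+1).choose N + 2^(N+1) * K.choose (N+1)) * (N+1)
            = (2*K+1).choose N * (N+1) + 2^N * (K.choose (N+1) * (N+1)) * 2 := by ring
          _ = (2*K+1).choose N * (N+1) + 2^N * (K.choose N * (K-N)) * 2 := by rw [h2]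
          _ = (2*K+1).choose N * (N+1) + (2^N * K.choose N) * (2*(K-N)) := by ring
          _ ≤ (2*K+1).choose N * (N+1) + (2*K+1).choose N * (2*(K-N)) :=
              Nat.add_le_add_left (Nat.mul_le_mul_right _ hA) _
          _ = (2*K+1).choose N * ((N+1) + 2*(K-N)) := by ring
          _ = (2*K+1).choose N * (2*K+1 - N) := by congr 1; omega
          _ = (2*K+1).choose (N+1) * (N+1) := h1.symm
      exact Nat.le_of_mul_le_mul_right hmul (Nat.succ_pos N)
    calc 4*K^2 + 2^(N+1) * K.choose (N+1) + 2^N * K.choose N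
        < (2*K+1).choose N + 2^(N+1) * K.choose (N+1) := by
          linarith [ih', Nat.zero_le (2 ^ (N - 1) * K.choose (N - 1))]
      _ ≤ (2*K+1).choose (N+1) := key
end

section
/- Let M > 4 be an even integer and let K = M/2. Then for every integer p with 0 ≤ p ≤ K - 1, a_p^{(M)} ≠ a_{M-1-p}^{(M)}. -/
/-- The coefficients `a_p^{(M)} = Σ_{k=0}^{p} Σ_{j=0}^{M-2-p} (-1)^{M-2-k-j} C(k+j, k)`
for `0 ≤ p ≤ M-2`, and `0` outside this range. -/
def acoef (M p : ℕ) : ℤ :=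
  if p ≤ M - 2 then
    ∑ k ∈ Finset.range (p + 1), ∑ j ∈ Finset.range (M - 2 - p + 1),
      (-1 : ℤ) ^ (M - 2 - k - j) * ((k + j).choose k : ℤ)
  else 0

/-- Partial alternating sums of a column of Pascal's triangle. -/
def Tc (a b : ℕ) : ℤ := ∑ i ∈ Finset.range (b+1), (-1)^(b-i) * ((a+i).choose a : ℤ)

lemma Tc_zero_right (a : ℕ) : Tc a 0 = 1 := by simp [Tc]

lemma Tc_succ (a b : ℕ) : Tc a (b+1) = ((a+b+1).choose a : ℤ) - Tc a b := by
  unfold Tc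
  rw [Finset.sum_range_succ]
  have h : ∀ i ∈ Finset.range (b+1), (-1:ℤ)^(b+1-i) * ((a+i).choose a : ℤ)
      = -((-1:ℤ)^(b-i) * ((a+i).choose a : ℤ)) := by
    intro i hi
    have hi' : i ≤ b := by simpa using Nat.lt_succ_iff.mp (Finset.mem_range.mp hi)
    have : b+1-i = (b-i)+1 := by omega
    rw [this, pow_succ]; ring
  rw [Finset.sum_congr rfl h, Finset.sum_neg_distrib]
  have h1 : b + 1 - (b+1) = 0 := by omega
  rw [h1]
  have h2 : a + (b+1) = a + b + 1 := by omega
  rw [h2]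
  ring

lemma Tc_one (b : ℕ) : Tc 1 b = ((b/2 : ℕ) : ℤ) + 1 := by
  induction b with
  | zero => simp [Tc_zero_right]
  | succ b ih =>
    rw [Tc_succ, ih, Nat.choose_one_right]
    have h : ((b+1)/2 : ℕ) + 1 + (b/2 + 1) = 1 + b + 1 := by omega
    push_cast
    push_cast at h
    linarith

lemma Tc_zero_left (b : ℕ) : Tc 0 b = if Even b then 1 else 0 := by
  induction b with
  | zero => simp [Tc_zero_right]
  | succ b ih =>
    rw [Tc_succ, ih, Nat.choose_zero_right]
    by_cases h : Even b <;> simp [h, Nat.even_add_one]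

lemma Tc_rec (a b : ℕ) : Tc (a+1) (b+1) = Tc a (b+1) + Tc (a+1) b := by
  unfold Tc
  have key : ∀ i, ((a+1+i).choose (a+1) : ℤ)
      = ((a+i).choose a : ℤ) + ((a+i).choose (a+1) : ℤ) := by
    intro i
    have h : a+1+i = (a+i)+1 := by omega
    rw [h, Nat.choose_succ_succ]
    push_cast; ring
  have step1 : ∑ i ∈ Finset.range (b+1+1), (-1:ℤ)^(b+1-i) * ((a+1+i).choose (a+1) : ℤ)
      = ∑ i ∈ Finset.range (b+1+1), ((-1:ℤ)^(b+1-i) * ((a+i).choose a : ℤ)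
        + (-1:ℤ)^(b+1-i) * ((a+i).choose (a+1) : ℤ)) := by
    refine Finset.sum_congr rfl fun i _ => ?_
    rw [key]; ring
  rw [step1, Finset.sum_add_distrib]
  congr 1
  rw [Finset.sum_range_succ' (fun i => (-1:ℤ)^(b+1-i) * ((a+i).choose (a+1) : ℤ)) (b+1)]
  have h0 : ((a+0).choose (a+1) : ℤ) = 0 := by
    norm_num [Nat.choose_eq_zero_of_lt]
  rw [h0]
  simp only [mul_zero, add_zero]
  refine Finset.sum_congr rfl fun i hi => ?_
  have h1 : b + 1 - (i+1) = b - i := by omega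
  have h2 : a + (i+1) = a + 1 + i := by omega
  rw [h1, h2]

lemma Dnn : ∀ n a b : ℕ, a + b ≤ n → a ≤ b → Tc (b+1) a ≤ Tc (a+1) b := by
  intro n
  induction n with
  | zero =>
    intro a b h hab
    obtain ⟨rfl, rfl⟩ : a = 0 ∧ b = 0 := by omega
    exact le_refl _
  | succ n ih =>
    intro a b hn hab
    rcases Nat.eq_or_lt_of_le hab with rfl | hlt
    · exact le_refl _
    · match a, hlt with
      | 0, _ =>
        rw [Tc_zero_right, Tc_one]
        have : (0:ℤ) ≤ ((b/2 : ℕ) : ℤ) := Int.natCast_nonneg _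
        linarith
      | (c+1), hlt =>
        obtain ⟨d, rfl⟩ : ∃ d, b = d + 1 := ⟨b - 1, by omega⟩
        have e1 : Tc (d+1+1) (c+1) = Tc (d+1) (c+1) + Tc (d+1+1) c := Tc_rec (d+1) c
        have e2 : Tc (c+1+1) (d+1) = Tc (c+1) (d+1) + Tc (c+1+1) d := Tc_rec (c+1) d
        have h1 : Tc (d+1+1) c ≤ Tc (c+1) (d+1) := ih c (d+1) (by omega) (by omega)
        have h2 : Tc (d+1) (c+1) ≤ Tc (c+1+1) d := ih (c+1) d (by omega) (by omega)
        linarith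

lemma Dpos : ∀ n a b : ℕ, a + b ≤ n → a < b → 2 ≤ b → Tc (b+1) a < Tc (a+1) b := by
  intro n
  induction n with
  | zero => intro a b h hab hb; omega
  | succ n ih =>
    intro a b hn hab hb
    match a, hab with
    | 0, _ =>
      rw [Tc_zero_right, Tc_one]
      have h1 : (1:ℕ) ≤ b/2 := by omega
      have h2 : (1:ℤ) ≤ ((b/2 : ℕ) : ℤ) := by exact_mod_cast h1
      linarith
    | (c+1), hab =>
      obtain ⟨d, rfl⟩ : ∃ d, b = d + 1 := ⟨b - 1, by omega⟩
      have e1 : Tc (d+1+1) (c+1) = Tc (d+1) (c+1) + Tc (d+1+1) c := Tc_rec (d+1) c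
      have e2 : Tc (c+1+1) (d+1) = Tc (c+1) (d+1) + Tc (c+1+1) d := Tc_rec (c+1) d
      have h1 : Tc (d+1+1) c < Tc (c+1) (d+1) := ih c (d+1) (by omega) (by omega) (by omega)
      have h2 : Tc (d+1) (c+1) ≤ Tc (c+1+1) d := Dnn n (c+1) d (by omega) (by omega)
      linarith

lemma choose_swap (x y : ℕ) : ((x + y).choose x : ℤ) = ((y + x).choose y : ℤ) := by
  have h := Nat.choose_symm (Nat.le_add_right x y)
  rw [Nat.add_sub_cancel_left] at h
  rw [← h, Nat.add_comm]

lemma acoef_symm (M q : ℕ) (h : q ≤ M - 2) : acoef M (M - 2 - q) = acoef M q := by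
  unfold acoef
  rw [if_pos (Nat.sub_le _ _), if_pos h]
  have h2 : M - 2 - (M - 2 - q) = q := by omega
  rw [h2, Finset.sum_comm]
  refine Finset.sum_congr rfl fun x hx => Finset.sum_congr rfl fun y hy => ?_
  have he : M - 2 - y - x = M - 2 - x - y := by omega
  rw [he, choose_swap y x]

lemma acoef_zero (M : ℕ) : acoef M 0 = Tc 0 (M - 2) := by
  unfold acoef Tc
  rw [if_pos (Nat.zero_le _)]
  rw [Finset.sum_range_one]
  refine Finset.sum_congr rfl fun j hj => ?_
  norm_num

lemma acoef_diff (M p : ℕ) (h1 : 1 ≤ p) (h2 : p ≤ M - 2) :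
    acoef M p - acoef M (p - 1) = Tc p (M - 2 - p) - Tc (M - 2 - p + 1) (p - 1) := by
  unfold acoef
  rw [if_pos h2, if_pos (by omega : p - 1 ≤ M - 2)]
  have hr1 : p - 1 + 1 = p := by omega
  have hr2 : M - 2 - (p - 1) + 1 = (M - 2 - p + 1) + 1 := by omega
  rw [hr1, hr2]
  rw [Finset.sum_range_succ (fun k => ∑ j ∈ Finset.range (M - 2 - p + 1),
      (-1 : ℤ) ^ (M - 2 - k - j) * ((k + j).choose k : ℤ)) p]
  have hsplit : ∀ k, ∑ j ∈ Finset.range ((M - 2 - p + 1) + 1),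
      (-1 : ℤ) ^ (M - 2 - k - j) * ((k + j).choose k : ℤ)
      = (∑ j ∈ Finset.range (M - 2 - p + 1),
          (-1 : ℤ) ^ (M - 2 - k - j) * ((k + j).choose k : ℤ))
        + (-1 : ℤ) ^ (M - 2 - k - (M - 2 - p + 1)) * ((k + (M - 2 - p + 1)).choose k : ℤ) := by
    intro k
    exact Finset.sum_range_succ _ _
  rw [Finset.sum_congr rfl (fun k _ => hsplit k), Finset.sum_add_distrib]
  have hT1 : ∑ j ∈ Finset.range (M - 2 - p + 1),
      (-1 : ℤ) ^ (M - 2 - p - j) * ((p + j).choose p : ℤ) = Tc p (M - 2 - p) := rfl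
  have hT2 : ∑ k ∈ Finset.range p,
      (-1 : ℤ) ^ (M - 2 - k - (M - 2 - p + 1)) * ((k + (M - 2 - p + 1)).choose k : ℤ)
      = Tc (M - 2 - p + 1) (p - 1) := by
    unfold Tc
    rw [hr1]
    refine Finset.sum_congr rfl fun k hk => ?_
    have hk' : k < p := Finset.mem_range.mp hk
    have he : M - 2 - k - (M - 2 - p + 1) = p - 1 - k := by omega
    rw [he, choose_swap k (M - 2 - p + 1)]
  rw [hT1] at *
  linarith [hT2]

/-- For even `M > 4` and `K = M/2`: for all `0 ≤ p ≤ K-1`,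
`a_p^{(M)} ≠ a_{M-1-p}^{(M)}`. -/
theorem acoef_ne_even (M : ℕ) (hM : 4 < M) (hMeven : Even M) (K : ℕ) (hK : K = M / 2)
    (p : ℕ) (hp : p ≤ K - 1) : acoef M p ≠ acoef M (M - 1 - p) := by
  obtain ⟨t, ht⟩ := hMeven
  rcases Nat.eq_zero_or_pos p with rfl | hp1
  · -- p = 0 : acoef M 0 = 1, acoef M (M-1) = 0
    have hz : acoef M 0 = 1 := by
      rw [acoef_zero, Tc_zero_left, if_pos (by exact ⟨t - 1, by omega⟩ : Even (M - 2))]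
    have hz2 : acoef M (M - 1 - 0) = 0 := by
      unfold acoef
      rw [if_neg (by omega)]
    rw [hz, hz2]
    norm_num
  · -- p ≥ 1
    have hsym : acoef M (M - 1 - p) = acoef M (p - 1) := by
      have harg : M - 1 - p = M - 2 - (p - 1) := by omega
      rw [harg, acoef_symm M (p - 1) (by omega)]
    rw [hsym]
    have hpos : Tc (M - 2 - p + 1) (p - 1) < Tc ((p - 1) + 1) (M - 2 - p) :=
      Dpos ((p - 1) + (M - 2 - p)) (p - 1) (M - 2 - p) (le_refl _) (by omega) (by omega)
    have hr : (p - 1) + 1 = p := by omega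
    rw [hr] at hpos
    have hd := acoef_diff M p hp1 (by omega)
    intro hcontra
    rw [hcontra] at hd
    simp at hd
    linarith
end

section
/- Let M > 4 be an odd integer and let K = (M-1)/2. Then for every integer p with 1 ≤ p ≤ K, a_p^{(M)} ≠ a_{M-p}^{(M)}. -/
open Finset

/-- The rectangle sum `T p q = Σ_{k≤p} Σ_{j≤q} (-1)^{k+j} C(k+j,k)`. -/
def Trect (p q : ℕ) : ℤ :=
  ∑ k ∈ Finset.range (p + 1), ∑ j ∈ Finset.range (q + 1),
    (-1 : ℤ) ^ (k + j) * ((k + j).choose k : ℤ)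

/-- Alternating partial sum `F r J = Σ_{j≤J} (-1)^j C(r+j, j)`. -/
def Falt (r J : ℕ) : ℤ :=
  ∑ j ∈ Finset.range (J + 1), (-1 : ℤ) ^ j * ((r + j).choose j : ℤ)

lemma choose_mono_of_add_le {r a b : ℕ} (hab : a ≤ b) (h : a + b ≤ r) :
    r.choose a ≤ r.choose b := by
  have half : ∀ x y : ℕ, x ≤ y → 2 * y ≤ r → r.choose x ≤ r.choose y := by
    intro x y hxy hy
    induction y with
    | zero => simpa [Nat.le_zero.mp hxy]
    | succ n ih =>
      rcases Nat.eq_or_lt_of_le hxy with rfl | hlt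
      · exact le_rfl
      · have hx : x ≤ n := Nat.lt_succ_iff.mp hlt
        have h2n : 2 * n ≤ r := by omega
        refine (ih hx h2n).trans (Nat.choose_le_succ_of_lt_half_left ?_)
        have : (n + 1) ≤ r / 2 := Nat.le_div_iff_mul_le (by norm_num) |>.2 (by omega)
        omega
  by_cases hb : 2 * b ≤ r
  · exact half a b hab hb
  · have hbr : b ≤ r := by omega
    have hsym : r.choose (r - b) = r.choose b := Nat.choose_symm hbr
    have : r.choose a ≤ r.choose (r - b) := half a (r - b) (by omega) (by omega)
    omega

lemma Trect_symm (p q : ℕ) : Trect p q = Trect q p := by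
  unfold Trect
  rw [Finset.sum_comm]
  refine Finset.sum_congr rfl fun k _ => Finset.sum_congr rfl fun j _ => ?_
  rw [add_comm j k, Nat.choose_symm_add]

lemma Falt_even (r n : ℕ) :
    Falt (r + 1) (2 * n) = ∑ t ∈ Finset.range (n + 1), ((r + 2 * t).choose (2 * t) : ℤ) := by
  induction n with
  | zero => simp [Falt]
  | succ n ih =>
    have h1 : 2 * (n + 1) = (2 * n + 1) + 1 := by ring
    rw [h1]
    unfold Falt at ih ⊢
    rw [Finset.sum_range_succ, Finset.sum_range_succ (n := 2 * n + 1), ih,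
      Finset.sum_range_succ (n := n + 1)]
    have hs1 : (-1 : ℤ) ^ (2 * n + 1) = -1 := by
      rw [pow_succ, pow_mul]; norm_num
    have hs2 : (-1 : ℤ) ^ (2 * n + 1 + 1) = 1 := by
      rw [pow_succ, hs1]; norm_num
    rw [hs1, hs2]
    have hp : (r + 1 + (2 * n + 1 + 1)).choose (2 * n + 1 + 1)
        = (r + 1 + (2 * n + 1)).choose (2 * n + 1) + (r + 2 * (n + 1)).choose (2 * (n + 1)) := by
      have e1 : r + 1 + (2 * n + 1 + 1) = (r + 1 + (2 * n + 1)) + 1 := by ring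
      rw [e1, Nat.choose_succ_succ' (r + 1 + (2 * n + 1)) (2 * n + 1)]
      congr 2 <;> omega
    push_cast [hp]
    ring
  
lemma Falt_odd (r n : ℕ) :
    Falt r (2 * n + 1) = -∑ t ∈ Finset.range (n + 1), ((r + 2 * t).choose (2 * t + 1) : ℤ) := by
  induction n with
  | zero =>
    simp [Falt, Finset.sum_range_succ]
  | succ n ih =>
    have h1 : 2 * (n + 1) + 1 = (2 * n + 2) + 1 := by ring
    rw [h1]
    unfold Falt at ih ⊢
    rw [Finset.sum_range_succ, Finset.sum_range_succ (n := 2 * n + 2), ih,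
      Finset.sum_range_succ (n := n + 1)]
    have hs1 : (-1 : ℤ) ^ (2 * n + 2) = 1 := by
      rw [pow_add, pow_mul]; norm_num
    have hs2 : (-1 : ℤ) ^ (2 * n + 2 + 1) = -1 := by
      rw [pow_succ, hs1]; norm_num
    rw [hs1, hs2]
    have hp : (r + (2 * n + 2 + 1)).choose (2 * n + 2 + 1)
        = (r + (2 * n + 2)).choose (2 * n + 2) + (r + 2 * (n + 1)).choose (2 * (n + 1) + 1) := by
      have e1 : r + (2 * n + 2 + 1) = (r + (2 * n + 2)) + 1 := by ring
      rw [e1, Nat.choose_succ_succ' (r + (2 * n + 2)) (2 * n + 2)]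
      congr 2 <;> omega
    push_cast [hp]
    ring

/-- Peeling the top row of the rectangle. -/
lemma Trect_row (p q : ℕ) :
    Trect (p + 1) q = Trect p q
      + ∑ j ∈ Finset.range (q + 1), (-1 : ℤ) ^ (p + 1 + j) * ((p + 1 + j).choose (p + 1) : ℤ) :=
  Finset.sum_range_succ _ _

/-- Peeling the last column of the rectangle. -/
lemma Trect_col (p q : ℕ) :
    Trect p (q + 1) = Trect p q
      + ∑ k ∈ Finset.range (p + 1), (-1 : ℤ) ^ (k + (q + 1)) * ((k + (q + 1)).choose k : ℤ) := by
  unfold Trect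
  rw [← Finset.sum_add_distrib]
  exact Finset.sum_congr rfl fun k _ => Finset.sum_range_succ _ _

lemma row_eq (p q : ℕ) :
    (∑ j ∈ Finset.range (q + 1), (-1 : ℤ) ^ (p + j) * ((p + j).choose p : ℤ))
      = (-1 : ℤ) ^ p * Falt p q := by
  unfold Falt
  rw [Finset.mul_sum]
  refine Finset.sum_congr rfl fun j _ => ?_
  rw [pow_add, Nat.choose_symm_add, mul_assoc]

lemma col_eq (p q : ℕ) :
    (∑ k ∈ Finset.range (p + 1), (-1 : ℤ) ^ (k + (q + 1)) * ((k + (q + 1)).choose k : ℤ))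
      = (-1 : ℤ) ^ (q + 1) * Falt (q + 1) p := by
  unfold Falt
  rw [Finset.mul_sum]
  refine Finset.sum_congr rfl fun k _ => ?_
  rw [add_comm k (q + 1), pow_add, mul_assoc]

/-- The staircase difference, odd case: `p = 2m+1`, `q = 2m+2δ`. -/
lemma stair_odd (m δ : ℕ) :
    Trect (2 * m) (2 * m + 2 * δ + 1) - Trect (2 * m + 1) (2 * m + 2 * δ)
      = (∑ t ∈ Finset.range (m + δ + 1), ((2 * m + 2 * t).choose (2 * t) : ℤ))
        - ∑ s ∈ Finset.range (m + 1), ((2 * m + 2 * δ + 2 * s).choose (2 * s) : ℤ) := by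
  have hrow := Trect_row (2 * m) (2 * m + 2 * δ)
  have hcol := Trect_col (2 * m) (2 * m + 2 * δ)
  rw [row_eq (2 * m + 1) (2 * m + 2 * δ)] at hrow
  rw [col_eq (2 * m) (2 * m + 2 * δ)] at hcol
  have hF1 : Falt (2 * m + 1) (2 * m + 2 * δ) = ∑ t ∈ Finset.range (m + δ + 1),
      ((2 * m + 2 * t).choose (2 * t) : ℤ) := by
    have := Falt_even (2 * m) (m + δ)
    rw [show 2 * (m + δ) = 2 * m + 2 * δ from by ring] at this
    exact this
  have hF2 : Falt (2 * m + 2 * δ + 1) (2 * m) = ∑ s ∈ Finset.range (m + 1),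
      ((2 * m + 2 * δ + 2 * s).choose (2 * s) : ℤ) := by
    have := Falt_even (2 * m + 2 * δ) m
    exact this
  have hs1 : (-1 : ℤ) ^ (2 * m + 1) = -1 := by rw [pow_succ, pow_mul]; norm_num
  have hs2 : (-1 : ℤ) ^ (2 * m + 2 * δ + 1) = -1 := by
    rw [pow_succ, pow_add, pow_mul, pow_mul]; norm_num
  rw [hcol, hrow, hs1, hs2, hF1, hF2]
  ring

/-- The staircase difference, even case: `p = 2m+2`, `q = 2m+2δ+1`. -/
lemma stair_even (m δ : ℕ) :
    Trect (2 * m + 1) (2 * m + 2 * δ + 2) - Trect (2 * m + 2) (2 * m + 2 * δ + 1)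
      = (∑ t ∈ Finset.range (m + δ + 1), ((2 * m + 2 + 2 * t).choose (2 * t + 1) : ℤ))
        - ∑ s ∈ Finset.range (m + 1), ((2 * m + 2 * δ + 2 + 2 * s).choose (2 * s + 1) : ℤ) := by
  have hrow := Trect_row (2 * m + 1) (2 * m + 2 * δ + 1)
  have hcol := Trect_col (2 * m + 1) (2 * m + 2 * δ + 1)
  rw [row_eq (2 * m + 2) (2 * m + 2 * δ + 1)] at hrow
  rw [col_eq (2 * m + 1) (2 * m + 2 * δ + 1)] at hcol
  have hF1 : Falt (2 * m + 2) (2 * m + 2 * δ + 1) = -∑ t ∈ Finset.range (m + δ + 1),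
      ((2 * m + 2 + 2 * t).choose (2 * t + 1) : ℤ) := by
    have := Falt_odd (2 * m + 2) (m + δ)
    rw [show 2 * (m + δ) + 1 = 2 * m + 2 * δ + 1 from by ring] at this
    exact this
  have hF2 : Falt (2 * m + 2 * δ + 2) (2 * m + 1) = -∑ s ∈ Finset.range (m + 1),
      ((2 * m + 2 * δ + 2 + 2 * s).choose (2 * s + 1) : ℤ) := by
    have := Falt_odd (2 * m + 2 * δ + 2) m
    exact this
  have hs1 : (-1 : ℤ) ^ (2 * m + 2) = 1 := by rw [pow_add, pow_mul]; norm_num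
  have hs2 : (-1 : ℤ) ^ (2 * m + 2 * δ + 1 + 1) = 1 := by
    rw [show 2 * m + 2 * δ + 1 + 1 = 2 * (m + δ + 1) from by ring, pow_mul]; norm_num
  rw [hcol, hrow, hs1, hs2, hF1, hF2]
  ring

/-- The generic bound: a sum over a long range dominates a shifted, termwise-smaller sum,
with the unmatched initial terms as a lower bound on the difference. -/
lemma sum_sub_ge (c g : ℕ → ℕ) (m δ : ℕ) (h : ∀ s, s ≤ m → g s ≤ c (δ + s)) :
    (∑ t ∈ Finset.range δ, (c t : ℤ))
      ≤ (∑ t ∈ Finset.range (m + δ + 1), (c t : ℤ)) - ∑ s ∈ Finset.range (m + 1), (g s : ℤ) := by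
  have h1 : (∑ s ∈ Finset.range (m + 1), (g s : ℤ))
      ≤ ∑ s ∈ Finset.range (m + 1), (c (δ + s) : ℤ) := by
    refine Finset.sum_le_sum fun s hs => ?_
    exact_mod_cast h s (Nat.lt_succ_iff.mp (Finset.mem_range.mp hs))
  have h2 : (∑ s ∈ Finset.range (m + 1), (c (δ + s) : ℤ))
      = ∑ i ∈ Finset.Ico δ (δ + (m + 1)), (c i : ℤ) := by
    rw [Finset.sum_Ico_eq_sum_range]
    simp
  have h3 : (∑ t ∈ Finset.range δ, (c t : ℤ)) + ∑ i ∈ Finset.Ico δ (δ + (m + 1)), (c i : ℤ)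
      = ∑ t ∈ Finset.range (δ + (m + 1)), (c t : ℤ) :=
    Finset.sum_range_add_sum_Ico _ (by omega)
  have h4 : δ + (m + 1) = m + δ + 1 := by omega
  rw [h4] at h2 h3
  linarith

lemma stair_odd_nonneg (m δ : ℕ) :
    Trect (2 * m + 1) (2 * m + 2 * δ) ≤ Trect (2 * m) (2 * m + 2 * δ + 1) := by
  have h := stair_odd m δ
  have hb := sum_sub_ge (fun t => (2 * m + 2 * t).choose (2 * t))
    (fun s => (2 * m + 2 * δ + 2 * s).choose (2 * s)) m δ ?_
  · have h0 : (0 : ℤ) ≤ ∑ t ∈ Finset.range δ,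
        (((2 * m + 2 * t).choose (2 * t) : ℕ) : ℤ) :=
      Finset.sum_nonneg fun t _ => by positivity
    omega
  · intro s hs
    have he : 2 * m + 2 * δ + 2 * s = 2 * m + 2 * (δ + s) := by ring
    rw [he]
    exact choose_mono_of_add_le (by omega) (by omega)

lemma stair_even_nonneg (m δ : ℕ) :
    Trect (2 * m + 2) (2 * m + 2 * δ + 1) ≤ Trect (2 * m + 1) (2 * m + 2 * δ + 2) := by
  have h := stair_even m δ
  have hb := sum_sub_ge (fun t => (2 * m + 2 + 2 * t).choose (2 * t + 1))
    (fun s => (2 * m + 2 * δ + 2 + 2 * s).choose (2 * s + 1)) m δ ?_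
  · have h0 : (0 : ℤ) ≤ ∑ t ∈ Finset.range δ,
        (((2 * m + 2 + 2 * t).choose (2 * t + 1) : ℕ) : ℤ) :=
      Finset.sum_nonneg fun t _ => by positivity
    omega
  · intro s hs
    have he : 2 * m + 2 * δ + 2 + 2 * s = 2 * m + 2 + 2 * (δ + s) := by ring
    rw [he]
    exact choose_mono_of_add_le (by omega) (by omega)

lemma stair_odd_pos (m δ : ℕ) :
    Trect (2 * m + 1) (2 * m + 2 * (δ + 1)) < Trect (2 * m) (2 * m + 2 * (δ + 1) + 1) := by
  have h := stair_odd m (δ + 1)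
  have hb := sum_sub_ge (fun t => (2 * m + 2 * t).choose (2 * t))
    (fun s => (2 * m + 2 * (δ + 1) + 2 * s).choose (2 * s)) m (δ + 1) ?_
  · have h0 : (1 : ℤ) ≤ ∑ t ∈ Finset.range (δ + 1),
        (((2 * m + 2 * t).choose (2 * t) : ℕ) : ℤ) := by
      have hmem : 0 ∈ Finset.range (δ + 1) := Finset.mem_range.mpr (by omega)
      have := Finset.single_le_sum
        (f := fun t => (((2 * m + 2 * t).choose (2 * t) : ℕ) : ℤ))
        (fun t _ => by positivity) hmem
      simpa using this
    omega
  · intro s hs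
    have he : 2 * m + 2 * (δ + 1) + 2 * s = 2 * m + 2 * ((δ + 1) + s) := by ring
    rw [he]
    exact choose_mono_of_add_le (by omega) (by omega)

lemma stair_even_pos (m δ : ℕ) :
    Trect (2 * m + 2) (2 * m + 2 * (δ + 1) + 1) < Trect (2 * m + 1) (2 * m + 2 * (δ + 1) + 2) := by
  have h := stair_even m (δ + 1)
  have hb := sum_sub_ge (fun t => (2 * m + 2 + 2 * t).choose (2 * t + 1))
    (fun s => (2 * m + 2 * (δ + 1) + 2 + 2 * s).choose (2 * s + 1)) m (δ + 1) ?_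
  · have h0 : (1 : ℤ) ≤ ∑ t ∈ Finset.range (δ + 1),
        (((2 * m + 2 + 2 * t).choose (2 * t + 1) : ℕ) : ℤ) := by
      have hmem : 0 ∈ Finset.range (δ + 1) := Finset.mem_range.mpr (by omega)
      have := Finset.single_le_sum
        (f := fun t => (((2 * m + 2 + 2 * t).choose (2 * t + 1) : ℕ) : ℤ))
        (fun t _ => by positivity) hmem
      have hd : 1 ≤ (2 * m + 2 + 2 * 0).choose (2 * 0 + 1) := by
        simp [Nat.choose_one_right]
      omega
    omega
  · intro s hs
    have he : 2 * m + 2 * (δ + 1) + 2 + 2 * s = 2 * m + 2 + 2 * ((δ + 1) + s) := by ring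
    rw [he]
    exact choose_mono_of_add_le (by omega) (by omega)

lemma acoef_eq_neg_Trect {M p : ℕ} (hM : Odd M) (hM3 : 3 ≤ M) (hp : p ≤ M - 2) :
    acoef M p = -Trect p (M - 2 - p) := by
  unfold acoef Trect
  rw [if_pos hp, ← Finset.sum_neg_distrib, ]
  refine Finset.sum_congr rfl fun k hk => ?_
  rw [← Finset.sum_neg_distrib]
  refine Finset.sum_congr rfl fun j hj => ?_
  have hk' : k ≤ p := Nat.lt_succ_iff.mp (Finset.mem_range.mp hk)
  have hj' : j ≤ M - 2 - p := Nat.lt_succ_iff.mp (Finset.mem_range.mp hj)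
  have hkj : k + j ≤ M - 2 := by omega
  have hodd : Odd (M - 2) := by
    obtain ⟨w, hw⟩ := hM
    exact ⟨w - 1, by omega⟩
  have hsub : (M - 2 - k - j) + (k + j) = M - 2 := by omega
  have hsign : (-1 : ℤ) ^ (M - 2 - k - j) * (-1 : ℤ) ^ (k + j) = -1 := by
    rw [← pow_add, hsub, hodd.neg_one_pow]
  have hsq : (-1 : ℤ) ^ (k + j) * (-1 : ℤ) ^ (k + j) = 1 := by
    rw [← pow_add, ← two_mul, pow_mul]; norm_num
  have : (-1 : ℤ) ^ (M - 2 - k - j) = -(-1 : ℤ) ^ (k + j) := by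
    have := congrArg (· * (-1 : ℤ) ^ (k + j)) hsign
    simp only [mul_assoc] at this
    rw [hsq, mul_one] at this
    linarith [this]
  rw [this]
  ring

/-- For odd `M > 4` and `K = (M-1)/2`: for all `1 ≤ p ≤ K`,
`a_p^{(M)} ≠ a_{M-p}^{(M)}`. -/
theorem acoef_ne_odd (M : ℕ) (hM : 4 < M) (hModd : Odd M) (K : ℕ) (hK : K = (M - 1) / 2)
    (p : ℕ) (hp1 : 1 ≤ p) (hp2 : p ≤ K) : acoef M p ≠ acoef M (M - p) := by
  have hK' : M = 2 * K + 1 := by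
    obtain ⟨w, hw⟩ := id hModd
    omega
  have hK2 : 2 ≤ K := by omega
  have hM3 : 3 ≤ M := by omega
  rcases Nat.lt_or_ge p 2 with hp | hp
  · -- p = 1
    have hp1' : p = 1 := by omega
    subst hp1'
    have hMp : ¬ (M - 1 ≤ M - 2) := by omega
    have haMp : acoef M (M - 1) = 0 := by unfold acoef; rw [if_neg hMp]
    have ha1 : acoef M 1 = -Trect 1 (M - 2 - 1) := acoef_eq_neg_Trect hModd hM3 (by omega)
    have hst : Trect 1 (M - 2 - 1) < Trect 0 (M - 2 - 1 + 1) := by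
      have h := stair_odd_pos 0 (K - 2)
      rw [show 2 * 0 + 2 * (K - 2 + 1) + 1 = M - 2 - 1 + 1 from by omega,
        show 2 * 0 + 2 * (K - 2 + 1) = M - 2 - 1 from by omega,
        show 2 * 0 + 1 = 1 from by omega, show 2 * 0 = 0 from by omega] at h
      exact h
    have hT0 : Trect 0 (M - 2 - 1 + 1) = 0 := by
      have he3 : M - 2 - 1 + 1 = 2 * (K - 1) + 1 := by omega
      rw [he3]
      unfold Trect
      rw [Finset.sum_range_one]
      have hcong : ∀ j ∈ Finset.range (2 * (K - 1) + 1 + 1),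
          (-1 : ℤ) ^ (0 + j) * ((0 + j).choose 0 : ℤ) = (-1 : ℤ) ^ j := by
        intro j _; simp
      rw [Finset.sum_congr rfl hcong]
      have hgs := neg_one_geom_sum (R := ℤ) (n := 2 * (K - 1) + 1 + 1)
      rw [hgs, if_pos ⟨K - 1 + 1, by omega⟩]
    intro hcontra
    rw [haMp, ha1] at hcontra
    omega
  · -- 2 ≤ p ≤ K
    have hqp : M - p ≤ M - 2 := by omega
    have ha1 : acoef M p = -Trect p (M - 2 - p) := acoef_eq_neg_Trect hModd hM3 (by omega)
    have ha2 : acoef M (M - p) = -Trect (M - p) (M - 2 - (M - p)) :=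
      acoef_eq_neg_Trect hModd hM3 hqp
    have he4 : M - 2 - (M - p) = p - 2 := by omega
    rw [he4] at ha2
    have hsymm : Trect (M - p) (p - 2) = Trect (p - 2) (M - p) := Trect_symm _ _
    have key : Trect p (M - 2 - p) < Trect (p - 2) (M - p) := by
      rcases Nat.even_or_odd p with ⟨m, hm⟩ | ⟨m, hm⟩
      · -- p = 2m, m ≥ 1
        set δ := K - p with hδ
        have hm1 : 1 ≤ m := by omega
        have h1 : Trect p (M - 2 - p) ≤ Trect (p - 1) (M - 2 - p + 1) := by
          have h := stair_even_nonneg (m - 1) δ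
          rw [show 2 * (m - 1) + 2 * δ + 2 = M - 2 - p + 1 from by omega,
            show 2 * (m - 1) + 2 * δ + 1 = M - 2 - p from by omega,
            show 2 * (m - 1) + 2 = p from by omega,
            show 2 * (m - 1) + 1 = p - 1 from by omega] at h
          exact h
        have h2 : Trect (p - 1) (M - 2 - p + 1) < Trect (p - 2) (M - p) := by
          have h := stair_odd_pos (m - 1) δ
          rw [show 2 * (m - 1) + 2 * (δ + 1) + 1 = M - p from by omega,
            show 2 * (m - 1) + 2 * (δ + 1) = M - 2 - p + 1 from by omega,
            show 2 * (m - 1) + 1 = p - 1 from by omega,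
            show 2 * (m - 1) = p - 2 from by omega] at h
          exact h
        exact lt_of_le_of_lt h1 h2
      · -- p = 2m+1, m ≥ 1
        set δ := K - p with hδ
        have hm1 : 1 ≤ m := by omega
        have h1 : Trect p (M - 2 - p) ≤ Trect (p - 1) (M - 2 - p + 1) := by
          have h := stair_odd_nonneg m δ
          rw [show 2 * m + 2 * δ + 1 = M - 2 - p + 1 from by omega,
            show 2 * m + 2 * δ = M - 2 - p from by omega,
            show 2 * m + 1 = p from by omega,
            show 2 * m = p - 1 from by omega] at h
          exact h
        have h2 : Trect (p - 1) (M - 2 - p + 1) < Trect (p - 2) (M - p) := by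
          have h := stair_even_pos (m - 1) δ
          rw [show 2 * (m - 1) + 2 * (δ + 1) + 2 = M - p from by omega,
            show 2 * (m - 1) + 2 * (δ + 1) + 1 = M - 2 - p + 1 from by omega,
            show 2 * (m - 1) + 2 = p - 1 from by omega,
            show 2 * (m - 1) + 1 = p - 2 from by omega] at h
          exact h
        exact lt_of_le_of_lt h1 h2
    intro hcontra
    rw [ha1, ha2, hsymm] at hcontra
    omega
end

section
/- Let M ≥ 3 be an integer. Then for every integer p with 1 ≤ p ≤ M-3, the coefficients satisfy the recurrence a_p^{(M)} = a_{p-1}^{(M-1)} + a_p^{(M-1)} + (-1)^M. -/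
open Finset

/-- Auxiliary double sum with normalized signs:
`Usum p q = Σ_{k=0}^{p} Σ_{j=0}^{q} (-1)^{k+j} C(k+j, k)`. -/
def Usum (p q : ℕ) : ℤ :=
  ∑ k ∈ Finset.range (p+1), ∑ j ∈ Finset.range (q+1),
    (-1:ℤ)^(k+j) * ((k+j).choose k : ℤ)

lemma two_mul_alt (n : ℕ) : 2 * ∑ j ∈ Finset.range (n+1), (-1:ℤ)^j = 1 + (-1)^n := by
  induction n with
  | zero => simp
  | succ n ih => rw [Finset.sum_range_succ, mul_add, ih, pow_succ]; ring

lemma gPascal (k j : ℕ) :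
    (-1:ℤ)^((k+1)+(j+1)) * (((k+1)+(j+1)).choose (k+1) : ℤ)
    = -((-1:ℤ)^(k+(j+1)) * ((k+(j+1)).choose k : ℤ))
      - ((-1:ℤ)^((k+1)+j) * (((k+1)+j).choose (k+1) : ℤ)) := by
  have h : (k+1)+(j+1) = (k+j+1)+1 := by omega
  rw [h, Nat.choose_succ_succ]
  have h1 : k+(j+1) = k+j+1 := by omega
  have h2 : (k+1)+j = k+j+1 := by omega
  rw [h1, h2]
  push_cast
  ring

lemma keyU (p q : ℕ) : Usum (p+1) (q+1) + Usum p (q+1) + Usum (p+1) q = 1 := by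
  set g : ℕ → ℕ → ℤ := fun k j => (-1:ℤ)^(k+j) * ((k+j).choose k : ℤ) with hg
  have hU : ∀ a b, Usum a b = ∑ k ∈ range (a+1), ∑ j ∈ range (b+1), g k j := fun a b => rfl
  have hA : ∀ k, g k 0 = (-1:ℤ)^k := by intro k; simp [hg]
  have hB : ∀ j, g 0 j = (-1:ℤ)^j := by intro j; simp [hg]
  have inner : ∀ k, ∑ j ∈ range (q+1+1), g k j = ∑ j ∈ range (q+1), g k (j+1) + g k 0 :=
    fun k => Finset.sum_range_succ' _ _
  have hsplit : Usum (p+1) (q+1)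
      = (∑ k ∈ range (p+1), ∑ j ∈ range (q+1), g (k+1) (j+1))
        + (∑ k ∈ range (p+1), g (k+1) 0) + (∑ j ∈ range (q+2), g 0 j) := by
    rw [hU, Finset.sum_range_succ' (fun k => ∑ j ∈ range (q+1+1), g k j) (p+1),
      Finset.sum_congr rfl (fun k _ => inner (k+1)), Finset.sum_add_distrib]
  have h1 : ∑ k ∈ range (p+1), ∑ j ∈ range (q+1), g k (j+1)
      = Usum p (q+1) - ∑ k ∈ range (p+1), g k 0 := by
    rw [hU, Finset.sum_congr rfl (fun k _ => inner k), Finset.sum_add_distrib]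
    ring
  have h2 : ∑ k ∈ range (p+1), ∑ j ∈ range (q+1), g (k+1) j
      = Usum (p+1) q - ∑ j ∈ range (q+1), g 0 j := by
    rw [hU, Finset.sum_range_succ' (fun k => ∑ j ∈ range (q+1), g k j) (p+1)]
    ring
  have hP : ∑ k ∈ range (p+1), ∑ j ∈ range (q+1), g (k+1) (j+1)
      = -(∑ k ∈ range (p+1), ∑ j ∈ range (q+1), g k (j+1))
        - ∑ k ∈ range (p+1), ∑ j ∈ range (q+1), g (k+1) j := by
    rw [Finset.sum_congr rfl
      (fun k _ => Finset.sum_congr rfl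
        (fun j _ => show g (k+1) (j+1) = -(g k (j+1)) - g (k+1) j from gPascal k j))]
    simp only [sub_eq_add_neg, Finset.sum_add_distrib, Finset.sum_neg_distrib]
  have hA' : ∑ k ∈ range (p+1), g (k+1) 0 = -∑ k ∈ range (p+1), (-1:ℤ)^k := by
    simp [hA, pow_succ, Finset.sum_neg_distrib]
  have hD : ∑ j ∈ range (q+2), g 0 j
      = ∑ j ∈ range (q+1), (-1:ℤ)^j + (-1:ℤ)^(q+1) := by
    rw [Finset.sum_range_succ]
    simp [hB]
  have hA2 : ∑ k ∈ range (p+1), g k 0 = ∑ k ∈ range (p+1), (-1:ℤ)^k :=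
    Finset.sum_congr rfl (fun k _ => hA k)
  rw [hsplit, hP, h1, h2, hA', hD, hA2, Finset.sum_congr rfl (fun j _ => hB j)]
  have := two_mul_alt q
  rw [pow_succ]
  ring_nf
  ring_nf at this
  linarith

lemma neg_one_pow_sub' (a b : ℕ) (h : b ≤ a) : (-1:ℤ)^(a-b) = (-1)^a * (-1)^b := by
  have h1 : (-1:ℤ)^a = (-1)^(a-b) * (-1)^b := by rw [← pow_add, Nat.sub_add_cancel h]
  have hb : (-1:ℤ)^b * (-1)^b = 1 := by
    rw [← pow_add]; exact Even.neg_one_pow ⟨b, rfl⟩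
  calc (-1:ℤ)^(a-b) = (-1)^(a-b) * ((-1)^b * (-1)^b) := by rw [hb, mul_one]
    _ = (-1)^a * (-1)^b := by rw [← mul_assoc, ← h1]

lemma acoef_eq_Usum (M p : ℕ) (h2 : 2 ≤ M) (hp : p ≤ M - 2) :
    acoef M p = (-1:ℤ)^M * Usum p (M - 2 - p) := by
  rw [acoef, if_pos hp, Usum, Finset.mul_sum]
  refine Finset.sum_congr rfl fun k hk => ?_
  rw [Finset.mul_sum]
  refine Finset.sum_congr rfl fun j hj => ?_
  simp only [Finset.mem_range] at hk hj
  have hkj : k + j ≤ M - 2 := by omega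
  have he : M - 2 - k - j = (M - 2) - (k+j) := by omega
  have hM2 : (-1:ℤ)^(M-2) = (-1)^M := by
    conv_rhs => rw [show M = (M-2)+2 from by omega]
    rw [pow_add]; ring
  rw [he, neg_one_pow_sub' (M-2) (k+j) hkj, hM2]
  ring

/-- For `M ≥ 3` and `1 ≤ p ≤ M-3`, the coefficients satisfy
`a_p^{(M)} = a_{p-1}^{(M-1)} + a_p^{(M-1)} + (-1)^M`. -/
theorem acoef_recurrence (M : ℕ) (hM : 3 ≤ M) (p : ℕ) (hp1 : 1 ≤ p) (hp2 : p ≤ M - 3) :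
    acoef M p = acoef (M - 1) (p - 1) + acoef (M - 1) p + (-1 : ℤ) ^ M := by
  obtain ⟨a, rfl⟩ : ∃ a, p = a + 1 := ⟨p - 1, by omega⟩
  simp only [Nat.add_sub_cancel]
  obtain ⟨b, hb⟩ : ∃ b, M - 2 - (a+1) = b + 1 := ⟨M - 4 - a, by omega⟩
  rw [acoef_eq_Usum M (a+1) (by omega) (by omega),
      acoef_eq_Usum (M-1) a (by omega) (by omega),
      acoef_eq_Usum (M-1) (a+1) (by omega) (by omega)]
  rw [hb, show (M-1) - 2 - a = b + 1 from by omega, show (M-1) - 2 - (a+1) = b from by omega]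
  have hM1 : (-1:ℤ)^(M-1) = -(-1:ℤ)^M := by
    conv_rhs => rw [show M = (M-1)+1 from by omega]
    rw [pow_succ]; ring
  rw [hM1]
  linear_combination ((-1:ℤ)^M) * keyU a b
end

section
/- Let K ≥ 3 be an integer and set M = 2K. Then the finite sequence a_0^{(M)}, a_1^{(M)}, …, a_{K-1}^{(M)} is strictly increasing: a_p^{(M)} < a_{p+1}^{(M)} for all 0 ≤ p ≤ K-2. -/
def ac_c (k j : ℕ) : ℤ := (-1) ^ (k + j) * ((k + j).choose k : ℤ)

def ac_col (m n : ℕ) : ℤ := ∑ k ∈ Finset.range (m + 1), ac_c k n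

def ac_S (m n : ℕ) : ℤ := ∑ j ∈ Finset.range (n + 1), ac_col m j

def ac_D (p q : ℕ) : ℤ := ac_S (p + 1) q - ac_S p (q + 1)

lemma ac_c_rec (k j : ℕ) : ac_c (k+1) (j+1) + ac_c (k+1) j + ac_c k (j+1) = 0 := by
  have h : (k+1+(j+1)).choose (k+1) = (k+(j+1)).choose k + (k+1+j).choose (k+1) := by
    have e1 : k+1+(j+1) = (k+j+1)+1 := by ring
    have e2 : k+(j+1) = k+j+1 := by ring
    have e3 : k+1+j = k+j+1 := by ring
    rw [e1, e2, e3]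
    exact Nat.choose_succ_succ _ _
  simp only [ac_c, h]
  push_cast
  have e1 : k+1+(j+1) = (k+j)+2 := by ring
  have e2 : k+(j+1) = (k+j)+1 := by ring
  have e3 : k+1+j = (k+j)+1 := by ring
  rw [e1, e2, e3]
  ring

lemma ac_col_rec (m n : ℕ) : ac_col (m+1) (n+1) + ac_col (m+1) n + ac_col m (n+1) = 0 := by
  induction m with
  | zero =>
    have h0 : ac_c 0 (n+1) = -ac_c 0 n := by
      simp [ac_c, pow_succ]
    have h1 := ac_c_rec 0 n
    norm_num at h1
    simp only [ac_col, Finset.sum_range_succ, Finset.sum_range_one, Finset.sum_range_zero]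
    linarith
  | succ m ih =>
    have h := ac_c_rec (m+1) n
    simp only [ac_col, Finset.sum_range_succ] at ih ⊢
    linarith

lemma ac_S_col (m n : ℕ) : ac_S m (n+1) = ac_S m n + ac_col m (n+1) :=
  Finset.sum_range_succ _ _

lemma ac_col_zero (m : ℕ) : ac_col (m+1) 0 + ac_col m 0 = 1 := by
  induction m with
  | zero => simp [ac_col, ac_c, Finset.sum_range_succ]
  | succ m ih =>
    have h : ac_c (m+2) 0 + ac_c (m+1) 0 = 0 := by
      simp [ac_c, pow_succ]
    simp only [ac_col, Finset.sum_range_succ] at ih ⊢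
    linarith

lemma ac_S_rec (m n : ℕ) : ac_S (m+1) (n+1) + ac_S (m+1) n + ac_S m (n+1) = 1 := by
  induction n with
  | zero =>
    have h1 := ac_col_rec m 0
    have h2 := ac_col_zero m
    norm_num at h1
    simp only [ac_S, Finset.sum_range_succ, Finset.sum_range_one, Finset.sum_range_zero]
    linarith
  | succ n ih =>
    have h := ac_col_rec m (n+1)
    rw [ac_S_col (m+1) (n+1), ac_S_col (m+1) n, ac_S_col m (n+1)] at *
    linarith

lemma ac_c_symm (k j : ℕ) : ac_c k j = ac_c j k := by
  have h : (k + j).choose k = (k + j).choose j := by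
    have := Nat.choose_symm (Nat.le_add_right k j)
    simpa using this.symm
  simp only [ac_c, Nat.add_comm j k, h]

lemma ac_S_symm (m n : ℕ) : ac_S m n = ac_S n m := by
  simp only [ac_S, ac_col]
  rw [Finset.sum_comm]
  exact Finset.sum_congr rfl fun k _ => Finset.sum_congr rfl fun j _ => ac_c_symm k j

lemma ac_D_antisymm (p q : ℕ) : ac_D p q = -ac_D q p := by
  simp only [ac_D, ac_S_symm p (q+1), ac_S_symm (p+1) q]
  ring

lemma ac_D_rec (p q : ℕ) :
    ac_D (p+2) (q+2) = ac_D (p+2) q + 2 * ac_D (p+1) (q+1) + ac_D p (q+2) := by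
  have h1 := ac_S_rec (p+2) (q+1)
  have h2 := ac_S_rec (p+1) (q+2)
  have h3 := ac_S_rec p (q+2)
  have h4 := ac_S_rec (p+2) q
  simp only [ac_D]
  have e : p+1+1+1 = p+3 := rfl
  linarith

lemma ac_col0 (n : ℕ) : ac_col 0 n = (-1) ^ n := by
  simp [ac_col, ac_c]

lemma ac_col1 (n : ℕ) : ac_col 1 n = (-1) ^ (n+1) * n := by
  simp only [ac_col, Finset.sum_range_succ, Finset.sum_range_one, ac_c, zero_add,
    Nat.choose_zero_right, Nat.choose_one_right]
  push_cast
  ring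

lemma ac_S0 (t : ℕ) : ac_S 0 (2*t) = 1 := by
  induction t with
  | zero => simp [ac_S, ac_col0]
  | succ t ih =>
    have e : 2*(t+1) = (2*t+1)+1 := by ring
    rw [e, ac_S_col, ac_S_col, ac_col0, ac_col0, ih]
    have h1 : (-1:ℤ)^(2*t+1) = -1 := Odd.neg_one_pow ⟨t, by ring⟩
    have h2 : (-1:ℤ)^(2*t+1+1) = 1 := Even.neg_one_pow ⟨t+1, by ring⟩
    rw [h1, h2]; ring

lemma ac_S1 (t : ℕ) : ac_S 1 (2*t+1) = t + 1 := by
  induction t with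
  | zero => norm_num [ac_S, Finset.sum_range_succ, ac_col1]
  | succ t ih =>
    have e : 2*(t+1)+1 = (2*t+2)+1 := by ring
    have e2 : 2*t+2 = (2*t+1)+1 := by ring
    rw [e, ac_S_col, e2, ac_S_col, ← e2, ih, ac_col1, ac_col1]
    have h1 : (-1:ℤ)^(2*t+2+1) = -1 := Odd.neg_one_pow ⟨t+1, by ring⟩
    have h2 : (-1:ℤ)^(2*t+2+1+1) = 1 := Even.neg_one_pow ⟨t+2, by ring⟩
    rw [h1, h2]; push_cast; ring

lemma ac_S2 (t : ℕ) : ac_S 2 (2*t) = (t:ℤ)*t + t + 1 := by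
  induction t with
  | zero => norm_num [ac_S, ac_col, ac_c, Finset.sum_range_succ]
  | succ t ih =>
    have e : 2*(t+1) = (2*t+1)+1 := by ring
    have e2 : 2*t+1 = (2*t)+1 := rfl
    rw [e, ac_S_col, e2, ac_S_col, ih]
    have hrec := ac_col_rec 1 (2*t+1)
    have hc1 : ac_col 1 (2*t+1+1) = -(2*t+2) := by
      rw [ac_col1]
      have : (-1:ℤ)^(2*t+1+1+1) = -1 := Odd.neg_one_pow ⟨t+1, by ring⟩
      rw [this]; push_cast; ring
    push_cast
    push_cast at hc1
    linarith

lemma ac_D_pos_aux (n : ℕ) : ∀ p d : ℕ, p + d ≤ n → 1 ≤ p + d → 0 < ac_D p (p + 2*d + 1) := by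
  induction n with
  | zero => intro p d h1 h2; omega
  | succ n ih =>
    intro p d hn hd
    match p with
    | 0 =>
      obtain ⟨e, rfl⟩ : ∃ e, d = e + 1 := ⟨d - 1, by omega⟩
      have h1 : ac_S 1 (2*(e+1)+1) = (e:ℤ) + 1 + 1 := by rw [ac_S1]; push_cast; ring
      have h2 : ac_S 0 (2*(e+2)) = 1 := ac_S0 (e+2)
      have e1 : 0 + 2*(e+1) + 1 = 2*(e+1)+1 := by ring
      have e2 : 2*(e+1)+1+1 = 2*(e+2) := by ring
      rw [e1]
      simp only [ac_D, e2, h1, h2]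
      linarith
    | 1 =>
      have e1 : 1 + 2*d + 1 = 2*(d+1) := by ring
      rw [e1]
      simp only [ac_D]
      have h1 : ac_S (1+1) (2*(d+1)) = ((d:ℤ)+1)*((d:ℤ)+1) + ((d:ℤ)+1) + 1 := by
        rw [show (1:ℕ)+1 = 2 from rfl, ac_S2]; push_cast; ring
      have h2 : ac_S 1 (2*(d+1)+1) = (d:ℤ)+1+1 := by rw [ac_S1]; push_cast; ring
      rw [h1, h2]
      have hd0 : (0:ℤ) ≤ (d:ℤ) := Int.natCast_nonneg d
      nlinarith
    | (p+2) =>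
      rcases d with _ | e
      · -- d = 0 : q = p+3
        have hrec := ac_D_rec p (p+1)
        have hanti : ac_D (p+2) (p+1) = -ac_D (p+1) (p+2) := ac_D_antisymm _ _
        have h1 : 0 < ac_D (p+1) ((p+1) + 2*0 + 1) := ih (p+1) 0 (by omega) (by omega)
        have h2 : 0 < ac_D p (p + 2*1 + 1) := ih p 1 (by omega) (by omega)
        have e1 : (p+1) + 2*0 + 1 = p+2 := by ring
        have e2 : p + 2*1 + 1 = p+3 := by ring
        rw [e1] at h1; rw [e2] at h2
        have e3 : (p+2) + 2*0 + 1 = p+3 := by ring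
        rw [e3]
        have e4 : p+1+2 = p+3 := by ring
        rw [e4] at hrec
        linarith
      · -- d = e+1
        have hrec := ac_D_rec p (p + 2*e + 3)
        have h1 : 0 < ac_D (p+2) ((p+2) + 2*e + 1) := ih (p+2) e (by omega) (by omega)
        have h2 : 0 < ac_D (p+1) ((p+1) + 2*(e+1) + 1) := ih (p+1) (e+1) (by omega) (by omega)
        have h3 : 0 < ac_D p (p + 2*(e+2) + 1) := ih p (e+2) (by omega) (by omega)
        have e1 : (p+2) + 2*e + 1 = p + 2*e + 3 := by ring
        have e2 : (p+1) + 2*(e+1) + 1 = (p + 2*e + 3) + 1 := by ring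
        have e3 : p + 2*(e+2) + 1 = (p + 2*e + 3) + 2 := by ring
        rw [e1] at h1; rw [e2] at h2; rw [e3] at h3
        have e4 : (p+2) + 2*(e+1) + 1 = (p + 2*e + 3) + 2 := by ring
        rw [e4]
        linarith

lemma ac_D_pos (p d : ℕ) (h : 1 ≤ p + d) : 0 < ac_D p (p + 2*d + 1) :=
  ac_D_pos_aux (p + d) p d le_rfl h

lemma acoef_eq_S (K p : ℕ) (h2 : 2 ≤ K) (hp : p ≤ 2*K - 2) :
    acoef (2*K) p = ac_S p (2*K - 2 - p) := by
  have hM : 2*K - 2 = 2*(K-1) := by omega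
  rw [acoef, if_pos (by omega : p ≤ 2*K - 2)]
  rw [Finset.sum_comm]
  simp only [ac_S, ac_col]
  refine Finset.sum_congr rfl fun j hj => Finset.sum_congr rfl fun k hk => ?_
  simp only [Finset.mem_range] at hk hj
  have hkj : k + j ≤ 2*K - 2 := by omega
  have hsign : (-1:ℤ)^(2*K - 2 - k - j) = (-1)^(k+j) := by
    rcases Nat.even_or_odd (k + j) with ⟨r, hr⟩ | ⟨r, hr⟩
    · have h1 : (-1:ℤ)^(k+j) = 1 := Even.neg_one_pow ⟨r, by omega⟩
      have h2 : (-1:ℤ)^(2*K-2-k-j) = 1 := Even.neg_one_pow ⟨K - 1 - r, by omega⟩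
      rw [h1, h2]
    · have h1 : (-1:ℤ)^(k+j) = -1 := Odd.neg_one_pow ⟨r, by omega⟩
      have h2 : (-1:ℤ)^(2*K-2-k-j) = -1 := Odd.neg_one_pow ⟨K - 2 - r, by omega⟩
      rw [h1, h2]
  rw [hsign, ac_c]


/-- For `K ≥ 3` and `M = 2K`, the sequence
`a_0^{(M)}, a_1^{(M)}, …, a_{K-1}^{(M)}` is strictly increasing. -/
theorem acoef_strictMono (K : ℕ) (hK : 3 ≤ K) (M : ℕ) (hM : M = 2 * K)
    (p : ℕ) (hp : p ≤ K - 2) : acoef M p < acoef M (p + 1) := by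
  subst hM
  have h1 : acoef (2*K) p = ac_S p (2*K - 2 - p) := acoef_eq_S K p (by omega) (by omega)
  have h2 : acoef (2*K) (p+1) = ac_S (p+1) (2*K - 2 - (p+1)) := acoef_eq_S K (p+1) (by omega) (by omega)
  set q := 2*K - 3 - p with hq
  have hq1 : 2*K - 2 - p = q + 1 := by omega
  have hq2 : 2*K - 2 - (p+1) = q := by omega
  rw [h1, h2, hq1, hq2]
  have hd : 0 < ac_D p (p + 2*(K-2-p) + 1) := ac_D_pos p (K-2-p) (by omega)
  have he : p + 2*(K-2-p) + 1 = q := by omega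
  rw [he] at hd
  simp only [ac_D] at hd
  linarith
end

section
/- Let M ≥ 2 be an integer and work in the polynomial ring ℝ[x_1, …, x_M]. Let a, b ∈ {1, …, M} be distinct indices, and for 0 ≤ j ≤ M-2 let σ_j^{(a,b)} denote the j-th elementary symmetric polynomial in the M-2 variables {x_1, …, x_M} \ {x_a, x_b}. Then σ_j^{(a,b)} - (-1)^j · Σ_{k=0}^{j} x_a^{j-k} x_b^{k} belongs to the ideal I generated by the elementary symmetric polynomials σ_1, …, σ_M of x_1, …, x_M. -/
open MvPolynomial Finset

private noncomputable def auxS (M : ℕ) (s : Finset (Fin M)) (j : ℕ) : MvPolynomial (Fin M) ℝ :=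
  ∑ t ∈ s.powersetCard j, ∏ i ∈ t, X i

private lemma auxS_insert (M : ℕ) (s : Finset (Fin M)) (i : Fin M) (hi : i ∉ s) (j : ℕ) :
    auxS M (insert i s) (j + 1) = auxS M s (j + 1) + X i * auxS M s j := by
  unfold auxS
  rw [Finset.powersetCard_succ_insert hi, Finset.sum_union, Finset.sum_image, Finset.mul_sum]
  · congr 1
    refine Finset.sum_congr rfl fun t ht => ?_
    rw [Finset.prod_insert (fun hit => hi ((Finset.mem_powersetCard.mp ht).1 hit))]
  · intro t ht u hu h
    have ht' := (Finset.mem_powersetCard.mp ht).1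
    have hu' := (Finset.mem_powersetCard.mp hu).1
    have key : ∀ v : Finset (Fin M), v ⊆ s → (insert i v).erase i = v := fun v hv =>
      Finset.erase_insert (fun h => hi (hv h))
    rw [← key t ht', ← key u hu', h]
  · rw [Finset.disjoint_left]
    intro t ht ht'
    obtain ⟨u, hu, rfl⟩ := Finset.mem_image.mp ht'
    exact hi ((Finset.mem_powersetCard.mp ht).1 (Finset.mem_insert_self i u))

private lemma auxT_cong (M : ℕ) (a : Fin M) (j : ℕ) (hj : j ≤ M) :
    auxS M (Finset.univ.erase a) j - (-X a) ^ j
      ∈ Ideal.span ((fun n => MvPolynomial.esymm (Fin M) ℝ n) '' Set.Icc 1 M) := by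
  induction j with
  | zero =>
      simp only [auxS, Finset.powersetCard_zero, Finset.sum_singleton, Finset.prod_empty,
        pow_zero, sub_self]
      exact Ideal.zero_mem _
  | succ j ih =>
      have h1 := auxS_insert M (Finset.univ.erase a) a (Finset.notMem_erase a _) j
      rw [Finset.insert_erase (Finset.mem_univ a)] at h1
      have he : MvPolynomial.esymm (Fin M) ℝ (j + 1) = auxS M Finset.univ (j + 1) := rfl
      have hmem : MvPolynomial.esymm (Fin M) ℝ (j + 1)
          ∈ Ideal.span ((fun n => MvPolynomial.esymm (Fin M) ℝ n) '' Set.Icc 1 M) :=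
        Ideal.subset_span ⟨j + 1, ⟨by omega, by omega⟩, rfl⟩
      have hgoal : auxS M (Finset.univ.erase a) (j + 1) - (-X a) ^ (j + 1)
          = MvPolynomial.esymm (Fin M) ℝ (j + 1)
            + (-X a) * (auxS M (Finset.univ.erase a) j - (-X a) ^ j) := by
        rw [he, h1]; ring
      rw [hgoal]
      exact Ideal.add_mem _ hmem (Ideal.mul_mem_left _ _ (ih (by omega)))

/-- Let `M ≥ 2`, let `a ≠ b` be two of the `M` variable
indices and `0 ≤ j ≤ M-2`. Then the `j`-th elementary symmetric polynomial
`σ_j^{(a,b)}` in the `M-2` variables other than `x_a, x_b` satisfies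
`σ_j^{(a,b)} ≡ (-1)^j Σ_{k=0}^{j} x_a^{j-k} x_b^{k}` modulo the ideal `I`
generated by the elementary symmetric polynomials `σ_1, …, σ_M`. -/
theorem esymm_two_removed_congruence (M : ℕ) (hM : 2 ≤ M) (a b : Fin M) (hab : a ≠ b)
    (j : ℕ) (hj : j ≤ M - 2) :
    (∑ t ∈ Finset.powersetCard j ((Finset.univ : Finset (Fin M)) \ {a, b}),
        ∏ i ∈ t, (X i : MvPolynomial (Fin M) ℝ))
      - (-1 : MvPolynomial (Fin M) ℝ) ^ j *
          ∑ k ∈ Finset.range (j + 1), X a ^ (j - k) * X b ^ k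
      ∈ Ideal.span ((fun n => MvPolynomial.esymm (Fin M) ℝ n) '' Set.Icc 1 M) := by
  have hset : (Finset.univ : Finset (Fin M)) \ {a, b} = (Finset.univ.erase a).erase b := by
    ext x
    simp only [Finset.mem_sdiff, Finset.mem_univ, Finset.mem_insert, Finset.mem_singleton,
      Finset.mem_erase, true_and]
    tauto
  have hb : b ∈ Finset.univ.erase a := Finset.mem_erase.mpr ⟨hab.symm, Finset.mem_univ b⟩
  rw [hset]
  show auxS M ((Finset.univ.erase a).erase b) j
      - (-1 : MvPolynomial (Fin M) ℝ) ^ j * ∑ k ∈ Finset.range (j + 1), X a ^ (j - k) * X b ^ k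
    ∈ Ideal.span ((fun n => MvPolynomial.esymm (Fin M) ℝ n) '' Set.Icc 1 M)
  induction j with
  | zero =>
      have h0 : auxS M ((Finset.univ.erase a).erase b) 0 = 1 := by
        simp [auxS]
      rw [h0]
      norm_num
  | succ j ih =>
      have h1 := auxS_insert M ((Finset.univ.erase a).erase b) b (Finset.notMem_erase b _) j
      rw [Finset.insert_erase hb] at h1
      have hT := auxT_cong M a (j + 1) (by omega)
      have hU := ih (by omega)
      have hsum : (∑ k ∈ Finset.range (j + 2), (X a : MvPolynomial (Fin M) ℝ) ^ (j + 1 - k) * X b ^ k)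
          = X a ^ (j + 1) + X b * ∑ k ∈ Finset.range (j + 1), X a ^ (j - k) * X b ^ k := by
        rw [Finset.sum_range_succ', Finset.mul_sum]
        simp only [Nat.sub_zero, pow_zero, mul_one, Nat.succ_sub_succ]
        rw [add_comm]
        congr 1
        refine Finset.sum_congr rfl fun k hk => ?_
        ring
      have hgoal : auxS M ((Finset.univ.erase a).erase b) (j + 1)
            - (-1 : MvPolynomial (Fin M) ℝ) ^ (j + 1)
              * ∑ k ∈ Finset.range (j + 1 + 1), X a ^ (j + 1 - k) * X b ^ k
          = (auxS M (Finset.univ.erase a) (j + 1) - (-X a) ^ (j + 1))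
            + (-X b) * (auxS M ((Finset.univ.erase a).erase b) j
                - (-1 : MvPolynomial (Fin M) ℝ) ^ j
                  * ∑ k ∈ Finset.range (j + 1), X a ^ (j - k) * X b ^ k) := by
        have hrw : auxS M ((Finset.univ.erase a).erase b) (j + 1)
            = auxS M (Finset.univ.erase a) (j + 1)
              - X b * auxS M ((Finset.univ.erase a).erase b) j := by
          rw [h1]; ring
        rw [hrw, show j + 1 + 1 = j + 2 from rfl, hsum, neg_pow (X a : MvPolynomial (Fin M) ℝ), pow_succ (-1 : MvPolynomial (Fin M) ℝ)]
        ring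
      rw [hgoal]
      exact Ideal.add_mem _ hT (Ideal.mul_mem_left _ _ hU)
end
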